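/- arXiv:0806.0279 — 4 statements merged into one kernel-verified Lean document; each statement's English description precedes it below -/
import Mathlib

section
/- For integers k ≥ 0 and n ≥ l ≥ k+1, the number op_{n,k,≤l}^{k+1} of ordered preference sets (a_1,…,a_n) of length n with exactly k flaws, leading term a_1 = k+1, and a_i ≤ l for all i, satisfies (n+1) · op_{n,k,≤l}^{k+1} = (n−l+k+2) · C(n+l−k−1, l−k−1). -/
/-- The first unoccupied parking space `j` with `p ≤ j ≤ n`, if any. -/
def firstFree (n : ℕ) (occ : Finset ℕ) (p : ℕ) : Option ℕ :=
  (List.range' p (n + 1 - p)).find? (fun j => decide (j ∉ occ))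

/-- Number of cars that fail to park, processing the preference list in order,
given the set of already occupied spaces. -/
def flawsFrom (n : ℕ) : List ℕ → Finset ℕ → ℕ
  | [], _ => 0
  | p :: rest, occ =>
    match firstFree n occ p with
    | none => flawsFrom n rest occ + 1
    | some j => flawsFrom n rest (insert j occ)

/-- The number of flaws (unparked cars) of a preference list of length `n`. -/
def flaws (n : ℕ) (a : List ℕ) : ℕ := flawsFrom n a ∅

/-- A preference set of length `n`: a list of length `n` with entries in `{1, …, n}`. -/
def IsPrefSet (n : ℕ) (a : List ℕ) : Prop :=
  a.length = n ∧ ∀ x ∈ a, 1 ≤ x ∧ x ≤ n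

/-- An ordered preference set of length `n`: a nondecreasing preference set. -/
def IsOrderedPrefSet (n : ℕ) (a : List ℕ) : Prop :=
  IsPrefSet n a ∧ a.Pairwise (· ≤ ·)

/-- `op_{n,≥k}`: number of ordered preference sets of length `n` with at least `k` flaws. -/
noncomputable def opGe (n k : ℕ) : ℕ :=
  {a : List ℕ | IsOrderedPrefSet n a ∧ k ≤ flaws n a}.ncard

/-- `op_{n,≤k}`: number of ordered preference sets of length `n` with at most `k` flaws. -/
noncomputable def opLe (n k : ℕ) : ℕ :=
  {a : List ℕ | IsOrderedPrefSet n a ∧ flaws n a ≤ k}.ncard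

/-- `op_{n,k}`: number of ordered preference sets of length `n` with exactly `k` flaws. -/
noncomputable def opEq (n k : ℕ) : ℕ :=
  {a : List ℕ | IsOrderedPrefSet n a ∧ flaws n a = k}.ncard

/-- `op_{n,≥k,≤l}`: at least `k` flaws, every entry at most `l`. -/
noncomputable def opGeLe (n k l : ℕ) : ℕ :=
  {a : List ℕ | IsOrderedPrefSet n a ∧ k ≤ flaws n a ∧ ∀ x ∈ a, x ≤ l}.ncard

/-- `op_{n,≥k,≤l}^m`: at least `k` flaws, every entry at most `l`, leading term `m`. -/
noncomputable def opGeLeLead (n k l m : ℕ) : ℕ :=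
  {a : List ℕ | IsOrderedPrefSet n a ∧ k ≤ flaws n a ∧ (∀ x ∈ a, x ≤ l) ∧
    a.head? = some m}.ncard

/-- `op_{n,k,≤l}^m`: exactly `k` flaws, every entry at most `l`, leading term `m`. -/
noncomputable def opEqLeLead (n k l m : ℕ) : ℕ :=
  {a : List ℕ | IsOrderedPrefSet n a ∧ flaws n a = k ∧ (∀ x ∈ a, x ≤ l) ∧
    a.head? = some m}.ncard

/-- `op_{n,k}^m`: exactly `k` flaws, leading term `m`. -/
noncomputable def opLead (n k m : ℕ) : ℕ :=
  {a : List ℕ | IsOrderedPrefSet n a ∧ flaws n a = k ∧ a.head? = some m}.ncard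

/-- `op_{n,k,=l}^m`: exactly `k` flaws, maximal entry exactly `l`, leading term `m`. -/
noncomputable def opMaxLead (n k l m : ℕ) : ℕ :=
  {a : List ℕ | IsOrderedPrefSet n a ∧ flaws n a = k ∧ (∀ x ∈ a, x ≤ l) ∧ l ∈ a ∧
    a.head? = some m}.ncard

/-- Binomial coefficient `C(a, b)` with an integer lower index, which is `0`
when `b < 0` (the standard convention). -/
def chooseInt (a : ℕ) (b : ℤ) : ℕ := if 0 ≤ b then a.choose b.toNat else 0

lemma firstFree_spec (n c p : ℕ) (occ : Finset ℕ) (hc : ∀ x ∈ occ, x ≤ c)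
    (hfill : ∀ x, p ≤ x → x ≤ c → x ∈ occ) (hp : p ≤ n) :
    firstFree n occ p = if c < n then some (max p (c+1)) else none := by
  unfold firstFree
  split
  case isTrue h =>
    set q := max p (c+1) with hq
    have hqn : q ≤ n := by omega
    have hpq : p ≤ q := le_max_left _ _
    have hsplit : List.range' p (q - p) ++ List.range' q (n + 1 - q) =
        List.range' p (n + 1 - p) := by
      have := List.range'_append (s := p) (m := q - p) (n := n + 1 - q) (step := 1)
      simp only [one_mul] at this
      rw [show p + (q - p) = q by omega] at this
      rw [show (q - p) + (n + 1 - q) = n + 1 - p by omega] at this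
      exact this
    rw [← hsplit, List.find?_append]
    have h1 : (List.range' p (q - p)).find? (fun j => decide (j ∉ occ)) = none := by
      rw [List.find?_eq_none]
      intro x hx
      rw [List.mem_range'_1] at hx
      have : x ∈ occ := hfill x hx.1 (by omega)
      simp [this]
    rw [h1]
    have h2 : n + 1 - q = (n - q) + 1 := by omega
    rw [h2, List.range'_succ, List.find?_cons]
    have hqocc : q ∉ occ := fun hmem => by have := hc q hmem; omega
    simp [hqocc]
  case isFalse h =>
    rw [List.find?_eq_none]
    intro x hx
    rw [List.mem_range'_1] at hx
    have : x ∈ occ := hfill x hx.1 (by omega)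
    simp [this]

lemma flaws_full (n : ℕ) (as : List ℕ) (occ : Finset ℕ)
    (h : ∀ q ∈ as, firstFree n occ q = none) :
    flawsFrom n as occ = as.length := by
  induction as with
  | nil => rfl
  | cons p rest ih =>
    rw [flawsFrom, h p (List.mem_cons_self), ih fun q hq => h q (List.mem_cons_of_mem _ hq)]
    rfl

lemma flawsA (n : ℕ) (as : List ℕ) (c : ℕ) (occ : Finset ℕ)
    (hs : as.Pairwise (· ≤ ·)) (hcn : c ≤ n)
    (hc : ∀ x ∈ occ, x ≤ c)
    (hfill : ∀ p ∈ as, ∀ x, p ≤ x → x ≤ c → x ∈ occ)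
    (hget : ∀ (i : ℕ) (h : i < as.length), as[i] ≤ c + i + 1)
    (hub : ∀ x ∈ as, x ≤ n) :
    flawsFrom n as occ = c + as.length - n := by
  induction as generalizing c occ with
  | nil => simp [flawsFrom]; omega
  | cons p rest ih =>
    have hpn : p ≤ n := hub p (List.mem_cons_self)
    have hpc : p ≤ c + 1 := by have := hget 0 (by simp); simpa using this
    rw [List.pairwise_cons] at hs
    by_cases hlt : c < n
    · rw [flawsFrom, firstFree_spec n c p occ hc (hfill p (List.mem_cons_self)) hpn,
        if_pos hlt]
      have hmax : max p (c+1) = c + 1 := by omega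
      rw [hmax]
      have := ih (c+1) (insert (c+1) occ) hs.2 (by omega)
        (by intro x hx; rcases Finset.mem_insert.mp hx with h | h
            · omega
            · exact le_trans (hc x h) (by omega))
        (by intro p' hp' x hx1 hx2
            rcases Nat.lt_or_ge x (c+1) with h | h
            · exact Finset.mem_insert_of_mem
                (hfill p' (List.mem_cons_of_mem _ hp') x hx1 (by omega))
            · have : x = c + 1 := by omega
              simp [this])
        (by intro i h
            have h2 := hget (i+1) (by simp; omega)
            rw [List.getElem_cons_succ] at h2
            omega)
        (fun x hx => hub x (List.mem_cons_of_mem _ hx))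
      simp only [this, List.length_cons]
      omega
    · have hcn' : c = n := by omega
      have : flawsFrom n (p :: rest) occ = (p :: rest).length := by
        apply flaws_full
        intro q hq
        rw [firstFree_spec n c q occ hc (hfill q hq) (hub q hq), if_neg hlt]
      rw [this]
      simp [List.length_cons]
      omega

lemma invar_insert (c q : ℕ) (occ : Finset ℕ) (rest : List ℕ) (p : ℕ)
    (hc : ∀ x ∈ occ, x ≤ c)
    (hfill : ∀ p' ∈ p :: rest, ∀ x, p' ≤ x → x ≤ c → x ∈ occ)
    (hsort : ∀ b ∈ rest, p ≤ b)
    (hq : q = max p (c+1)) :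
    (∀ x ∈ insert q occ, x ≤ q) ∧
    (∀ p' ∈ rest, ∀ x, p' ≤ x → x ≤ q → x ∈ insert q occ) := by
  constructor
  · intro x hx
    rcases Finset.mem_insert.mp hx with h | h
    · omega
    · have := hc x h; omega
  · intro p' hp' x hx1 hx2
    rcases Nat.lt_or_ge x (c+1) with h | h
    · exact Finset.mem_insert_of_mem
        (hfill p' (List.mem_cons_of_mem _ hp') x hx1 (by omega))
    · have hpb := hsort p' hp'
      have : x = q := by omega
      simp [this]

lemma flawsB1 (n : ℕ) (as : List ℕ) (c : ℕ) (occ : Finset ℕ)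
    (hs : as.Pairwise (· ≤ ·)) (hcn : c ≤ n)
    (hc : ∀ x ∈ occ, x ≤ c)
    (hfill : ∀ p ∈ as, ∀ x, p ≤ x → x ≤ c → x ∈ occ)
    (hub : ∀ x ∈ as, x ≤ n) :
    as.length ≤ flawsFrom n as occ + (n - c) := by
  induction as generalizing c occ with
  | nil => simp
  | cons p rest ih =>
    have hpn : p ≤ n := hub p (List.mem_cons_self)
    rw [List.pairwise_cons] at hs
    rw [flawsFrom, firstFree_spec n c p occ hc (hfill p (List.mem_cons_self)) hpn]
    by_cases hlt : c < n
    · rw [if_pos hlt]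
      set q := max p (c+1) with hq
      have hqn : q ≤ n := by omega
      obtain ⟨hc', hfill'⟩ := invar_insert c q occ rest p hc hfill hs.1 hq
      have := ih q (insert q occ) hs.2 hqn hc' hfill'
        (fun x hx => hub x (List.mem_cons_of_mem _ hx))
      simp only [List.length_cons]
      omega
    · rw [if_neg hlt]
      have := ih c occ hs.2 hcn hc
        (fun p' hp' => hfill p' (List.mem_cons_of_mem _ hp'))
        (fun x hx => hub x (List.mem_cons_of_mem _ hx))
      simp only [List.length_cons]
      omega

lemma flawsB (n : ℕ) (as : List ℕ) (c : ℕ) (occ : Finset ℕ)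
    (hs : as.Pairwise (· ≤ ·)) (hcn : c ≤ n)
    (hc : ∀ x ∈ occ, x ≤ c)
    (hfill : ∀ p ∈ as, ∀ x, p ≤ x → x ≤ c → x ∈ occ)
    (hub : ∀ x ∈ as, x ≤ n)
    (hviol : ∃ (i : ℕ) (h : i < as.length), c + i + 2 ≤ as[i]) :
    as.length + 1 ≤ flawsFrom n as occ + (n - c) := by
  induction as generalizing c occ with
  | nil => simp at hviol
  | cons p rest ih =>
    obtain ⟨i, hi, hv⟩ := hviol
    have hpn : p ≤ n := hub p (List.mem_cons_self)
    rw [List.pairwise_cons] at hs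
    rw [flawsFrom, firstFree_spec n c p occ hc (hfill p (List.mem_cons_self)) hpn]
    by_cases hlt : c < n
    · rw [if_pos hlt]
      set q := max p (c+1) with hq
      have hqn : q ≤ n := by omega
      obtain ⟨hc', hfill'⟩ := invar_insert c q occ rest p hc hfill hs.1 hq
      have hub' : ∀ x ∈ rest, x ≤ n := fun x hx => hub x (List.mem_cons_of_mem _ hx)
      by_cases hjump : c + 2 ≤ p
      · -- q = p ≥ c+2, use B1
        have hqval : q = p := by omega
        have := flawsB1 n rest q (insert q occ) hs.2 hqn hc' hfill' hub'
        simp only [List.length_cons]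
        omega
      · -- p ≤ c+1, q = c+1, violation is in rest
        have hqval : q = c + 1 := by omega
        rcases i with _ | i'
        · simp at hv; omega
        · rw [List.getElem_cons_succ] at hv
          have := ih q (insert q occ) hs.2 hqn hc' hfill' hub'
            ⟨i', by simp at hi; omega, by omega⟩
          simp only [List.length_cons]
          omega
    · rw [if_neg hlt]
      rcases i with _ | i'
      · simp at hv; omega
      · rw [List.getElem_cons_succ] at hv
        have := ih c occ hs.2 hcn hc
          (fun p' hp' => hfill p' (List.mem_cons_of_mem _ hp'))
          (fun x hx => hub x (List.mem_cons_of_mem _ hx))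
          ⟨i', by simp at hi; omega, by omega⟩
        simp only [List.length_cons]
        omega

lemma flaws_char (n k l : ℕ) (hl : k + 1 ≤ l) (hn : l ≤ n) (rest : List ℕ)
    (hlen : rest.length + 1 = n)
    (hsort : ((k + 1) :: rest).Pairwise (· ≤ ·))
    (hub : ∀ x ∈ (k + 1) :: rest, x ≤ l) :
    (flaws n ((k + 1) :: rest) = k ↔
      ∀ (i : ℕ) (h : i < rest.length), rest[i] ≤ k + i + 2) := by
  rw [List.pairwise_cons] at hsort
  have hub' : ∀ x ∈ rest, x ≤ n := fun x hx =>
    le_trans (hub x (List.mem_cons_of_mem _ hx)) hn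
  have step1 : flaws n ((k + 1) :: rest) = flawsFrom n rest {k+1} := by
    rw [flaws, flawsFrom, firstFree_spec n 0 (k+1) ∅ (by simp) (by omega) (by omega),
      if_pos (by omega)]
    have : max (k+1) 1 = k + 1 := by omega
    rw [this]
    rfl
  have hc : ∀ x ∈ ({k+1} : Finset ℕ), x ≤ k + 1 := by simp
  have hfill : ∀ p ∈ rest, ∀ x, p ≤ x → x ≤ k + 1 → x ∈ ({k+1} : Finset ℕ) := by
    intro p hp x hx1 hx2
    have := hsort.1 p hp
    have : x = k + 1 := by omega
    simp [this]
  constructor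
  · intro hfl
    by_contra hcon
    push_neg at hcon
    obtain ⟨i, hi, hv⟩ := hcon
    have := flawsB n rest (k+1) {k+1} hsort.2 (by omega) hc hfill hub'
      ⟨i, hi, by omega⟩
    rw [step1] at hfl
    omega
  · intro hbd
    rw [step1, flawsA n rest (k+1) {k+1} hsort.2 (by omega) hc hfill
      (fun i h => by have := hbd i h; omega) hub']
    omega

def listsF : List ℕ → ℕ → Finset (List ℕ)
  | [], _ => {[]}
  | u :: us, lo => (Finset.Icc lo u).biUnion fun v => (listsF us v).image (List.cons v)

def cntL : List ℕ → ℕ → ℕ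
  | [], _ => 1
  | u :: us, lo => ∑ v ∈ Finset.Icc lo u, cntL us v

lemma card_listsF (bounds : List ℕ) (lo : ℕ) :
    (listsF bounds lo).card = cntL bounds lo := by
  induction bounds generalizing lo with
  | nil => rfl
  | cons u us ih =>
    rw [listsF, cntL, Finset.card_biUnion]
    · exact Finset.sum_congr rfl fun v _ => by
        rw [Finset.card_image_of_injective _ (fun a b h => by injection h), ih]
    · intro x _ y _ hxy
      rw [Function.onFun, Finset.disjoint_left]
      intro b hbx hby
      simp only [Finset.mem_image] at hbx hby
      obtain ⟨t1, _, h1⟩ := hbx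
      obtain ⟨t2, _, h2⟩ := hby
      rw [← h1] at h2
      injection h2 with h _
      exact hxy h.symm

lemma mem_listsF (bounds : List ℕ) (lo : ℕ) (b : List ℕ) :
    b ∈ listsF bounds lo ↔
      b.Pairwise (· ≤ ·) ∧ (∀ x ∈ b, lo ≤ x) ∧ List.Forall₂ (· ≤ ·) b bounds := by
  induction bounds generalizing lo b with
  | nil =>
    simp only [listsF, Finset.mem_singleton, List.forall₂_nil_right_iff]
    constructor
    · rintro rfl; simp
    · rintro ⟨_, _, rfl⟩; rfl
  | cons u us ih =>
    cases b with
    | nil =>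
      simp [listsF, List.forall₂_cons_right_iff]
    | cons v t =>
      simp only [listsF, Finset.mem_biUnion, Finset.mem_image, Finset.mem_Icc,
        List.forall₂_cons, List.pairwise_cons, List.mem_cons, forall_eq_or_imp]
      constructor
      · rintro ⟨w, ⟨hw1, hw2⟩, t', ht', heq⟩
        injection heq with h1 h2
        subst h1; subst h2
        obtain ⟨hsrt, hge, hf2⟩ := (ih w t').mp ht'
        exact ⟨⟨fun x hx => hge x hx, hsrt⟩, ⟨hw1, fun x hx => le_trans hw1 (hge x hx)⟩,
          hw2, hf2⟩
      · rintro ⟨⟨hvt, hsrt⟩, ⟨hlov, _⟩, hvu, hf2⟩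
        exact ⟨v, ⟨hlov, hvu⟩, t, (ih v t).mpr ⟨hsrt, hvt, hf2⟩, rfl⟩

def stair (s m L : ℕ) : List ℕ := (List.range m).map fun i => min (s + i) L

lemma stair_length (s m L : ℕ) : (stair s m L).length = m := by simp [stair]

lemma stair_get (s m L : ℕ) (i : ℕ) (h : i < m) :
    (stair s m L)[i]'(by simp [stair_length, h]) = min (s + i) L := by
  simp [stair]

lemma stair_succ (s m L : ℕ) : stair s (m + 1) L = min s L :: stair (s + 1) m L := by
  unfold stair
  rw [List.range_succ_eq_map, List.map_cons, List.map_map]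
  congr 1
  apply List.map_congr_left
  intro a _
  simp only [Function.comp_apply]
  omega

lemma hock1 (m : ℕ) : ∀ W, ∑ j ∈ Finset.range (W + 1), Nat.choose (m + j) j
    = Nat.choose (m + W + 1) W := by
  intro W
  induction W with
  | zero => simp
  | succ W ih =>
    rw [Finset.sum_range_succ, ih]
    have h : m + (W + 1) + 1 = (m + W + 1) + 1 := by omega
    rw [h, Nat.choose_succ_succ]
    have h2 : m + (W + 1) = m + W + 1 := by omega
    rw [h2]

lemma hock2 (m c : ℕ) : ∀ W, (∑ j ∈ Finset.range W, Nat.choose (m + j) c)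
    + Nat.choose m (c + 1) = Nat.choose (m + W) (c + 1) := by
  intro W
  induction W with
  | zero => simp
  | succ W ih =>
    rw [Finset.sum_range_succ]
    have : m + (W + 1) = (m + W) + 1 := by omega
    rw [this, Nat.choose_succ_succ]
    simp only [Nat.succ_eq_add_one]
    omega

lemma hockA (m a W : ℕ) (ha : 1 ≤ a) (hW : 1 ≤ W) :
    (∑ j ∈ Finset.range W, Nat.choose (m + (a + j)) (a + j)) + Nat.choose (m + a) (a - 1)
      = Nat.choose (m + a + W) (a + W - 1) := by
  have hsplit := Finset.sum_range_add (fun j => Nat.choose (m + j) j) a W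
  have h1 : ∑ j ∈ Finset.range a, Nat.choose (m + j) j = Nat.choose (m + a) (a - 1) := by
    obtain ⟨a', rfl⟩ : ∃ a', a = a' + 1 := ⟨a - 1, by omega⟩
    rw [hock1 m a']
    congr 1 <;> omega
  have h2 : ∑ j ∈ Finset.range (a + W), Nat.choose (m + j) j
      = Nat.choose (m + a + W) (a + W - 1) := by
    obtain ⟨W', rfl⟩ : ∃ W', W = W' + 1 := ⟨W - 1, by omega⟩
    have : a + (W' + 1) = (a + W') + 1 := by omega
    rw [this, hock1 m (a + W')]
    congr 1 <;> omega
  rw [h1] at hsplit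
  rw [h2] at hsplit
  omega

lemma sum_Icc_to_range (lo b : ℕ) (f : ℕ → ℕ) :
    ∑ v ∈ Finset.Icc lo b, f v = ∑ j ∈ Finset.range (b + 1 - lo), f (lo + j) := by
  rw [← Finset.Ico_add_one_right_eq_Icc, Finset.sum_Ico_eq_sum_range]

lemma cntL_stair (L : ℕ) : ∀ m s lo, 1 ≤ lo → lo ≤ s → lo ≤ L → L ≤ m + s →
    cntL (stair s m L) lo
      + (if s < L then Nat.choose (m + (L - lo)) (L - s - 1) else 0)
      = Nat.choose (m + (L - lo)) (L - lo) := by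
  intro m
  induction m with
  | zero =>
    intro s lo h1 h2 h3 h4
    rw [if_neg (by omega), show stair s 0 L = [] from rfl]
    simp [cntL]
  | succ m ih =>
    intro s lo h1 h2 h3 h4
    rw [stair_succ]
    show (∑ v ∈ Finset.Icc lo (min s L), cntL (stair (s+1) m L) v) + _ = _
    set b := min s L with hb
    have hlob : lo ≤ b := by omega
    set W := b + 1 - lo with hW
    set D := L - lo with hD
    set a := L - b with ha
    have haW : a + W = D + 1 := by omega
    have hW1 : 1 ≤ W := by omega
    -- pointwise IH
    have hIH : ∀ v ∈ Finset.Icc lo b,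
        cntL (stair (s+1) m L) v
          + (if s + 1 < L then Nat.choose (m + (L - v)) (L - (s+1) - 1) else 0)
          = Nat.choose (m + (L - v)) (L - v) := by
      intro v hv
      rw [Finset.mem_Icc] at hv
      exact ih (s+1) v (by omega) (by omega) (by omega) (by omega)
    have hsum : (∑ v ∈ Finset.Icc lo b, cntL (stair (s+1) m L) v)
        + (∑ v ∈ Finset.Icc lo b,
            (if s + 1 < L then Nat.choose (m + (L - v)) (L - (s+1) - 1) else 0))
        = ∑ v ∈ Finset.Icc lo b, Nat.choose (m + (L - v)) (L - v) := by
      rw [← Finset.sum_add_distrib]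
      exact Finset.sum_congr rfl hIH
    -- evaluate the diagonal sum
    have hdiag : (∑ v ∈ Finset.Icc lo b, Nat.choose (m + (L - v)) (L - v))
        = ∑ j ∈ Finset.range W, Nat.choose (m + (a + j)) (a + j) := by
      rw [sum_Icc_to_range]
      rw [← Finset.sum_range_reflect (fun j => Nat.choose (m + (a + j)) (a + j)) W]
      apply Finset.sum_congr rfl
      intro j hj
      rw [Finset.mem_range] at hj
      have : a + (W - 1 - j) = L - (lo + j) := by omega
      rw [this]
    by_cases hsl : L ≤ s
    · -- no if-terms, a = 0
      rw [if_neg (by omega)]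
      have hE : (∑ v ∈ Finset.Icc lo b,
          (if s + 1 < L then Nat.choose (m + (L - v)) (L - (s+1) - 1) else 0)) = 0 := by
        apply Finset.sum_eq_zero; intro v _; rw [if_neg (by omega)]
      have ha0 : a = 0 := by omega
      have hWD : W = D + 1 := by omega
      have hdiag2 : (∑ j ∈ Finset.range W, Nat.choose (m + (a + j)) (a + j))
          = Nat.choose (m + 1 + D) D := by
        rw [hWD]
        have : ∀ j, m + (a + j) = m + j := by intro j; omega
        calc ∑ j ∈ Finset.range (D + 1), Nat.choose (m + (a + j)) (a + j)
            = ∑ j ∈ Finset.range (D + 1), Nat.choose (m + j) j := by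
              apply Finset.sum_congr rfl; intro j _; rw [this j, ha0, Nat.zero_add]
          _ = Nat.choose (m + D + 1) D := hock1 m D
          _ = Nat.choose (m + 1 + D) D := by congr 1; omega
      omega
    · push_neg at hsl
      rw [if_pos hsl]
      have hab : b = s := by omega
      have haval : a = L - s := by omega
      have ha1 : 1 ≤ a := by omega
      have hdiag3 := hockA m a W ha1 hW1
      -- ∑ diag + C(m+a, a-1) = C(m+a+W, a+W-1)
      have hidx1 : m + a + W = m + 1 + D := by omega
      have hidx2 : a + W - 1 = D := by omega
      rw [hidx1, hidx2] at hdiag3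
      by_cases hsl2 : s + 1 < L
      · -- E-terms present
        have hE : (∑ v ∈ Finset.Icc lo b,
            (if s + 1 < L then Nat.choose (m + (L - v)) (L - (s+1) - 1) else 0))
            = ∑ j ∈ Finset.range W, Nat.choose (m + a + j) (a - 2) := by
          calc (∑ v ∈ Finset.Icc lo b,
              (if s + 1 < L then Nat.choose (m + (L - v)) (L - (s+1) - 1) else 0))
              = ∑ v ∈ Finset.Icc lo b, Nat.choose (m + (L - v)) (a - 2) := by
                apply Finset.sum_congr rfl; intro v _
                rw [if_pos hsl2]; congr 1; omega
            _ = ∑ j ∈ Finset.range W, Nat.choose (m + (L - (lo + j))) (a - 2) := by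
                rw [sum_Icc_to_range]
            _ = ∑ j ∈ Finset.range W, Nat.choose (m + a + j) (a - 2) := by
                rw [← Finset.sum_range_reflect
                  (fun j => Nat.choose (m + a + j) (a - 2)) W]
                apply Finset.sum_congr rfl
                intro j hj
                rw [Finset.mem_range] at hj
                congr 1
                omega
        have hE2 := hock2 (m + a) (a - 2) W
        have hc2 : a - 2 + 1 = a - 1 := by omega
        rw [hc2] at hE2
        have hidx3 : m + a + W = m + 1 + D := by omega
        rw [hidx3] at hE2
        have hgl : L - s - 1 = a - 1 := by omega
        rw [hgl]
        omega
      · -- s + 1 = L, a = 1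
        have hE : (∑ v ∈ Finset.Icc lo b,
            (if s + 1 < L then Nat.choose (m + (L - v)) (L - (s+1) - 1) else 0)) = 0 := by
          apply Finset.sum_eq_zero; intro v _; rw [if_neg hsl2]
        have ha1' : a = 1 := by omega
        have hca : Nat.choose (m + a) (a - 1) = 1 := by
          rw [ha1']; simp
        have hgoal2 : Nat.choose (m + 1 + D) (L - s - 1) = 1 := by
          have : L - s - 1 = 0 := by omega
          rw [this]; simp
        omega

lemma main_seteq (n k l : ℕ) (hl : k + 1 ≤ l) (hn : l ≤ n) :
    {a : List ℕ | IsOrderedPrefSet n a ∧ flaws n a = k ∧ (∀ x ∈ a, x ≤ l) ∧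
      a.head? = some (k + 1)} = ↑(listsF (stair (k + 1) n l) (k + 1)) := by
  ext a
  rw [Set.mem_setOf_eq, Finset.mem_coe, mem_listsF]
  constructor
  · rintro ⟨⟨⟨hlen, hmem⟩, hsort⟩, hfl, hub, hhead⟩
    obtain ⟨rest, rfl⟩ : ∃ rest, a = (k + 1) :: rest := by
      cases a with
      | nil => simp at hhead
      | cons x t =>
        simp only [List.head?_cons, Option.some.injEq] at hhead
        exact ⟨t, by rw [hhead]⟩
    have hlen' : rest.length + 1 = n := by simpa using hlen
    have hbd := (flaws_char n k l hl hn rest hlen' hsort hub).mp hfl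
    have hge : ∀ x ∈ (k + 1) :: rest, k + 1 ≤ x := by
      intro x hx
      rcases List.mem_cons.mp hx with rfl | hx'
      · exact le_rfl
      · exact (List.pairwise_cons.mp hsort).1 x hx'
    refine ⟨hsort, hge, ?_⟩
    rw [List.forall₂_iff_get]
    refine ⟨by simp [stair_length, hlen'.symm], ?_⟩
    intro i h1 h2
    rw [List.get_eq_getElem, List.get_eq_getElem]
    have h2' : i < n := by simpa [stair_length] using h2
    rw [stair_get (k+1) n l i h2']
    have hle_l : ((k + 1) :: rest)[i] ≤ l := by
      apply hub
      exact List.getElem_mem _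
    rcases i with _ | i'
    · simp only [List.getElem_cons_zero]
      omega
    · rw [List.getElem_cons_succ]
      have := hbd i' (by simpa using h1)
      rw [List.getElem_cons_succ] at hle_l
      omega
  · rintro ⟨hsort, hge, hf2⟩
    rw [List.forall₂_iff_get] at hf2
    obtain ⟨hlen2, hbd0⟩ := hf2
    have hlen : a.length = n := by simpa [stair_length] using hlen2
    have hbd : ∀ (i : ℕ) (h : i < a.length), a[i] ≤ min (k + 1 + i) l := by
      intro i h
      have h2 : i < (stair (k+1) n l).length := by simpa [stair_length] using hlen ▸ h
      have := hbd0 i h h2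
      rw [List.get_eq_getElem, List.get_eq_getElem] at this
      rwa [stair_get (k+1) n l i (by omega)] at this
    have hn1 : 1 ≤ n := by omega
    obtain ⟨x, rest, rfl⟩ : ∃ x rest, a = x :: rest := by
      cases a with
      | nil => simp at hlen; omega
      | cons x t => exact ⟨x, t, rfl⟩
    have hx : x = k + 1 := by
      have h0 := hbd 0 (by simp)
      simp only [List.getElem_cons_zero] at h0
      have := hge x (List.mem_cons_self)
      omega
    subst hx
    have hlen' : rest.length + 1 = n := by simpa using hlen
    have hub : ∀ y ∈ (k + 1) :: rest, y ≤ l := by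
      intro y hy
      obtain ⟨i, hi, rfl⟩ := List.mem_iff_getElem.mp hy
      have := hbd i hi
      omega
    refine ⟨⟨⟨hlen, ?_⟩, hsort⟩, ?_, hub, rfl⟩
    · intro y hy
      exact ⟨by have := hge y hy; omega, le_trans (hub y hy) hn⟩
    · rw [flaws_char n k l hl hn rest hlen' hsort hub]
      intro i h
      have := hbd (i + 1) (by simp; omega)
      rw [List.getElem_cons_succ] at this
      omega

theorem stmt8 (n k l : ℕ) (hl : k + 1 ≤ l) (hn : l ≤ n) :
    (n + 1) * opEqLeLead n k l (k + 1)
      = (n - l + k + 2) * Nat.choose (n + l - k - 1) (l - k - 1) := by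
  have hcount : opEqLeLead n k l (k + 1) = cntL (stair (k + 1) n l) (k + 1) := by
    rw [opEqLeLead, main_seteq n k l hl hn, Set.ncard_coe_finset, card_listsF]
  have hcf := cntL_stair l n (k + 1) (k + 1) (by omega) le_rfl hl (by omega)
  set N := cntL (stair (k + 1) n l) (k + 1) with hN
  obtain ⟨D, hD⟩ : ∃ D, l - (k + 1) = D := ⟨_, rfl⟩
  rw [hD] at hcf
  have hidx : n + l - k - 1 = n + D := by omega
  have hidx2 : l - k - 1 = D := by omega
  rw [hcount, hidx, hidx2]
  by_cases hD0 : k + 1 < l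
  · rw [if_pos hD0] at hcf
    -- hcf : N + C(n+D, D-1) = C(n+D, D)
    have hkey : Nat.choose (n + D) D * D = Nat.choose (n + D) (D - 1) * (n + 1) := by
      obtain ⟨D', rfl⟩ : ∃ D', D = D' + 1 := ⟨D - 1, by omega⟩
      have := Nat.choose_succ_right_eq (n + (D' + 1)) D'
      rw [show D' + 1 - 1 = D' by omega]
      rw [this]
      congr 1
      omega
    have hcoef : n - l + k + 2 = n + 1 - D := by omega
    rw [hcoef]
    have hexp : (n + 1) * Nat.choose (n + D) D
        = (n + 1 - D) * Nat.choose (n + D) D + D * Nat.choose (n + D) D := by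
      rw [← Nat.add_mul]
      congr 1
      omega
    have hmul : (n + 1) * N + (n + 1) * Nat.choose (n + D) (D - 1)
        = (n + 1) * Nat.choose (n + D) D := by
      rw [← Nat.mul_add, hcf]
    have : (n + 1) * Nat.choose (n + D) (D - 1) = D * Nat.choose (n + D) D := by
      rw [Nat.mul_comm, ← hkey, Nat.mul_comm]
    omega
  · have hD0' : D = 0 := by omega
    rw [if_neg (by omega)] at hcf
    rw [hD0'] at hcf
    simp only [Nat.add_zero, Nat.choose_zero_right, Nat.add_zero] at hcf
    have hN1 : N = 1 := by omega
    rw [hD0', hN1]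
    simp only [Nat.add_zero, Nat.choose_zero_right, Nat.mul_one]
    omega
end

section
/- For integers 1 ≤ m ≤ k and n ≥ l ≥ k+1, the number op_{n,k,≤l}^m of ordered preference sets (a_1,…,a_n) of length n with exactly k flaws, leading term a_1 = m, and a_i ≤ l for all i, satisfies (n−m+k+2) · op_{n,k,≤l}^m = (n−l+2k−m+4) · C(n+l−m−1, l−k−2). -/
/-! ### Auxiliary development -/

/-- Count of entries that are at least `p`. -/
def cntGe (p : ℕ) (a : List ℕ) : ℕ := a.countP (fun x => decide (p ≤ x))

/-- Simple parking fold for sorted lists: `q` is the next candidate space. -/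
def pkG (n : ℕ) : ℕ → List ℕ → ℕ
  | _, [] => 0
  | q, x :: t => if max x q ≤ n then pkG n (max x q + 1) t else pkG n q t + 1

lemma firstFree_some (n : ℕ) (occ : Finset ℕ) :
    ∀ (d p j : ℕ), j - p = d → p ≤ j → j ≤ n → j ∉ occ →
      (∀ i, p ≤ i → i < j → i ∈ occ) → firstFree n occ p = some j := by
  intro d
  induction d with
  | zero =>
    intro p j hd hpj hjn hj _
    have hpj' : p = j := by omega
    subst hpj'
    unfold firstFree
    have h1 : n + 1 - p = (n - p) + 1 := by omega
    rw [h1, List.range'_succ]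
    exact List.find?_cons_of_pos (by simpa using hj)
  | succ d ih =>
    intro p j hd hpj hjn hj hb
    have hplt : p < j := by omega
    unfold firstFree
    have h1 : n + 1 - p = (n - p) + 1 := by omega
    rw [h1, List.range'_succ]
    rw [List.find?_cons_of_neg (by simpa using hb p le_rfl hplt)]
    have h2 : List.range' (p + 1) (n - p) = List.range' (p + 1) (n + 1 - (p + 1)) := by
      congr 1
      omega
    rw [h2]
    exact ih (p + 1) j (by omega) (by omega) hjn hj (fun i h1' h2' => hb i (by omega) h2')

lemma firstFree_none (n : ℕ) (occ : Finset ℕ) (p : ℕ)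
    (h : ∀ j, p ≤ j → j ≤ n → j ∈ occ) : firstFree n occ p = none := by
  unfold firstFree
  rw [List.find?_eq_none]
  intro x hx
  have hx' := List.mem_range'_1.1 hx
  have hxn : x ≤ n := by omega
  simp only [decide_eq_true_eq, Decidable.not_not]
  exact h x hx'.1 hxn

lemma flawsFrom_eq_pkG (n : ℕ) :
    ∀ (a : List ℕ) (occ : Finset ℕ) (q lo : ℕ), a.Pairwise (· ≤ ·) →
      (∀ x ∈ a, lo ≤ x ∧ x ≤ n) → q ≤ n + 1 →
      (∀ j, q ≤ j → j ∉ occ) → (∀ j, lo ≤ j → j < q → j ∈ occ) →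
      flawsFrom n a occ = pkG n q a := by
  intro a
  induction a with
  | nil => intro occ q lo _ _ _ _ _; simp [flawsFrom, pkG]
  | cons x t ih =>
    intro occ q lo hs hb hq hocc1 hocc2
    have hx := hb x (List.mem_cons_self)
    have htb : ∀ y ∈ t, x ≤ y ∧ y ≤ n :=
      fun y hy => ⟨List.rel_of_pairwise_cons hs hy, (hb y (List.mem_cons_of_mem x hy)).2⟩
    have hts : t.Pairwise (· ≤ ·) := hs.of_cons
    by_cases hc : max x q ≤ n
    · have hff : firstFree n occ x = some (max x q) := by
        apply firstFree_some n occ (max x q - x) x (max x q) rfl (le_max_left _ _) hc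
          (hocc1 _ (le_max_right _ _))
        intro i hxi hilt
        exact hocc2 i (le_trans hx.1 hxi) (by omega)
      have : flawsFrom n (x :: t) occ = flawsFrom n t (insert (max x q) occ) := by
        simp [flawsFrom, hff]
      rw [this, pkG, if_pos hc]
      apply ih (insert (max x q) occ) (max x q + 1) x hts htb (by omega)
      · intro j hj
        simp only [Finset.mem_insert]
        push_neg
        exact ⟨by omega, hocc1 j (by omega)⟩
      · intro j hj1 hj2
        simp only [Finset.mem_insert]
        by_cases hje : j = max x q
        · exact Or.inl hje
        · exact Or.inr (hocc2 j (le_trans hx.1 hj1) (by omega))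
    · have hff : firstFree n occ x = none := by
        apply firstFree_none
        intro j hj1 hj2
        exact hocc2 j (le_trans hx.1 hj1) (by omega)
      have : flawsFrom n (x :: t) occ = flawsFrom n t occ + 1 := by
        simp [flawsFrom, hff]
      rw [this, pkG, if_neg hc]
      have := ih occ q x hts htb hq hocc1 (fun j hj1 hj2 => hocc2 j (le_trans hx.1 hj1) hj2)
      omega

lemma flaws_eq_pkG (n : ℕ) (a : List ℕ) (hs : a.Pairwise (· ≤ ·))
    (hb : ∀ x ∈ a, 1 ≤ x ∧ x ≤ n) : flaws n a = pkG n 1 a := by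
  apply flawsFrom_eq_pkG n a ∅ 1 1 hs hb (by omega)
  · intro j _; simp
  · intro j h1 h2; omega

lemma cntGe_cons (p x : ℕ) (t : List ℕ) :
    cntGe p (x :: t) = cntGe p t + if p ≤ x then 1 else 0 := by
  simp [cntGe, List.countP_cons]

lemma cntGe_len (p : ℕ) (a : List ℕ) (h : ∀ x ∈ a, p ≤ x) : cntGe p a = a.length :=
  List.countP_eq_length.2 (fun x hx => decide_eq_true (h x hx))

lemma cntGe_le_len (p : ℕ) (a : List ℕ) : cntGe p a ≤ a.length :=
  List.countP_le_length

lemma cntGe_zero (p : ℕ) (a : List ℕ) (h : ∀ x ∈ a, x < p) : cntGe p a = 0 :=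
  List.countP_eq_zero.2 (fun x hx => by simpa using Nat.not_le.2 (h x hx))

lemma sup_top (n q : ℕ) (b : List ℕ) (hq : q = n + 1) (hb : ∀ x ∈ b, 1 ≤ x ∧ x ≤ n) :
    (Finset.Icc 1 (n + 1)).sup (fun p => cntGe p b + max p q) = b.length + (n + 1) := by
  apply le_antisymm
  · apply Finset.sup_le
    intro p hp
    simp only [Finset.mem_Icc] at hp
    have h1 := cntGe_le_len p b
    have h2 : max p q ≤ n + 1 := by omega
    omega
  · have hmem : (1 : ℕ) ∈ Finset.Icc 1 (n + 1) := by simp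
    have := Finset.le_sup (f := fun p => cntGe p b + max p q) hmem
    have h1 : cntGe 1 b = b.length := cntGe_len 1 b (fun x hx => (hb x hx).1)
    simp only [h1] at this
    omega

lemma pkG_add (n : ℕ) :
    ∀ (a : List ℕ) (q : ℕ), a.Pairwise (· ≤ ·) → (∀ x ∈ a, 1 ≤ x ∧ x ≤ n) →
      1 ≤ q → q ≤ n + 1 →
      pkG n q a + (n + 1) = (Finset.Icc 1 (n + 1)).sup (fun p => cntGe p a + max p q) := by
  intro a
  induction a with
  | nil =>
    intro q _ _ hq1 hq2
    have : (Finset.Icc 1 (n + 1)).sup (fun p => cntGe p ([] : List ℕ) + max p q) = n + 1 := by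
      apply le_antisymm
      · apply Finset.sup_le
        intro p hp
        simp only [Finset.mem_Icc] at hp
        simp [cntGe]
        omega
      · have hmem : (n + 1) ∈ Finset.Icc 1 (n + 1) := by simp
        have h2 : cntGe (n + 1) ([] : List ℕ) + max (n + 1) q ≤
            (Finset.Icc 1 (n + 1)).sup (fun p => cntGe p ([] : List ℕ) + max p q) :=
          Finset.le_sup (f := fun p => cntGe p ([] : List ℕ) + max p q) hmem
        have hz : cntGe (n + 1) ([] : List ℕ) = 0 := rfl
        omega
    rw [this]
    simp [pkG]
  | cons x t ih =>
    intro q hs hb hq1 hq2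
    have hx := hb x (List.mem_cons_self)
    have htb : ∀ y ∈ t, 1 ≤ y ∧ y ≤ n := fun y hy => hb y (List.mem_cons_of_mem x hy)
    have htx : ∀ y ∈ t, x ≤ y := fun y hy => List.rel_of_pairwise_cons hs hy
    have hts : t.Pairwise (· ≤ ·) := hs.of_cons
    by_cases hc : max x q ≤ n
    · have hkey : (Finset.Icc 1 (n + 1)).sup (fun p => cntGe p (x :: t) + max p q)
          = (Finset.Icc 1 (n + 1)).sup (fun p => cntGe p t + max p (max x q + 1)) := by
        apply le_antisymm
        · apply Finset.sup_le
          intro p hp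
          simp only [Finset.mem_Icc] at hp
          rw [cntGe_cons]
          by_cases hpx : p ≤ x
          · rw [if_pos hpx]
            have h1 : cntGe p t = t.length := cntGe_len p t (fun y hy => le_trans hpx (htx y hy))
            have hmem : (1 : ℕ) ∈ Finset.Icc 1 (n + 1) := by simp
            have h2 : cntGe 1 t + max 1 (max x q + 1) ≤
                (Finset.Icc 1 (n + 1)).sup (fun p => cntGe p t + max p (max x q + 1)) :=
              Finset.le_sup (f := fun p => cntGe p t + max p (max x q + 1)) hmem
            have h3 : cntGe 1 t = t.length := cntGe_len 1 t (fun y hy => (htb y hy).1)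
            rw [h3] at h2
            omega
          · rw [if_neg hpx]
            have hmem : p ∈ Finset.Icc 1 (n + 1) := by simp; omega
            have h2 : cntGe p t + max p (max x q + 1) ≤
                (Finset.Icc 1 (n + 1)).sup (fun p => cntGe p t + max p (max x q + 1)) :=
              Finset.le_sup (f := fun p => cntGe p t + max p (max x q + 1)) hmem
            omega
        · apply Finset.sup_le
          intro p hp
          simp only [Finset.mem_Icc] at hp
          by_cases hpq : max x q + 1 ≤ p
          · have hmem : p ∈ Finset.Icc 1 (n + 1) := by simp; omega
            have h2 : cntGe p (x :: t) + max p q ≤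
                (Finset.Icc 1 (n + 1)).sup (fun p => cntGe p (x :: t) + max p q) :=
              Finset.le_sup (f := fun p => cntGe p (x :: t) + max p q) hmem
            rw [cntGe_cons, if_neg (by omega)] at h2
            omega
          · have h1 := cntGe_le_len p t
            have hmem : x ∈ Finset.Icc 1 (n + 1) := by simp; omega
            have h2 : cntGe x (x :: t) + max x q ≤
                (Finset.Icc 1 (n + 1)).sup (fun p => cntGe p (x :: t) + max p q) :=
              Finset.le_sup (f := fun p => cntGe p (x :: t) + max p q) hmem
            rw [cntGe_cons, if_pos le_rfl] at h2
            have h3 : cntGe x t = t.length := cntGe_len x t htx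
            rw [h3] at h2
            omega
      rw [pkG, if_pos hc, hkey]
      exact ih (max x q + 1) hts htb (by omega) (by omega)
    · have hqtop : q = n + 1 := by omega
      rw [pkG, if_neg hc]
      rw [sup_top n q (x :: t) hqtop hb]
      have := ih q hts htb hq1 hq2
      rw [sup_top n q t hqtop htb] at this
      simp only [List.length_cons]
      omega

lemma flaws_ge_iff (n k l : ℕ) (a : List ℕ) (hs : a.Pairwise (· ≤ ·))
    (hb : ∀ x ∈ a, 1 ≤ x ∧ x ≤ l) (hln : l ≤ n) (hk : 1 ≤ k) :
    k ≤ flaws n a ↔ ∃ p, 1 ≤ p ∧ p ≤ l ∧ n + k + 1 ≤ cntGe p a + p := by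
  have hbn : ∀ x ∈ a, 1 ≤ x ∧ x ≤ n := fun x hx => ⟨(hb x hx).1, le_trans (hb x hx).2 hln⟩
  rw [flaws_eq_pkG n a hs hbn]
  have hsum := pkG_add n a 1 hs hbn le_rfl (by omega)
  constructor
  · intro h
    have h2 : n + 1 + k ≤ (Finset.Icc 1 (n + 1)).sup (fun p => cntGe p a + max p 1) := by omega
    have h3 := (Finset.le_sup_iff (by omega : (0:ℕ) < n + 1 + k)).1 h2
    obtain ⟨p, hp, hple0⟩ := h3
    have hple : n + 1 + k ≤ cntGe p a + max p 1 := hple0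
    simp only [Finset.mem_Icc] at hp
    refine ⟨p, hp.1, ?_, by omega⟩
    by_contra hpl
    push_neg at hpl
    have : cntGe p a = 0 := cntGe_zero p a (fun x hx => lt_of_le_of_lt (hb x hx).2 hpl)
    omega
  · intro ⟨p, hp1, hp2, hp3⟩
    have hmem : p ∈ Finset.Icc 1 (n + 1) := by simp; omega
    have h5 : cntGe p a + max p 1 ≤
        (Finset.Icc 1 (n + 1)).sup (fun p => cntGe p a + max p 1) :=
      Finset.le_sup (f := fun p => cntGe p a + max p 1) hmem
    omega

lemma cntGe_append (p : ℕ) (u v : List ℕ) : cntGe p (u ++ v) = cntGe p u + cntGe p v :=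
  List.countP_append

lemma cntGe_singleton (p x : ℕ) : cntGe p [x] = if p ≤ x then 1 else 0 := by
  simp [cntGe, List.countP_cons]

/-- Sorted lists of length `n`, entries in `[1, l]`, leading term `m`. -/
def pkAll (n l m : ℕ) : Set (List ℕ) :=
  {a | a.length = n ∧ a.Pairwise (· ≤ ·) ∧ (∀ x ∈ a, 1 ≤ x ∧ x ≤ l) ∧ a.head? = some m}

/-- Those members of `pkAll` additionally satisfying `cntGe p a + p ≤ n + k` for all `p ≤ l`
(combinatorially: at most `k - 1` flaws). -/
def pkBal (n k l m : ℕ) : Set (List ℕ) :=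
  {a | a ∈ pkAll n l m ∧ ∀ p, 1 ≤ p → p ≤ l → cntGe p a + p ≤ n + k}

lemma pkAll_finite (n l m : ℕ) : (pkAll n l m).Finite := by
  apply Set.Finite.subset (Set.Finite.image (List.map (Fin.val (n := l + 1)))
    (List.finite_length_eq (Fin (l + 1)) n))
  rintro a ⟨hlen, -, hb, -⟩
  refine ⟨a.pmap (fun x hx => (⟨x, hx⟩ : Fin (l + 1)))
    (fun x hx => Nat.lt_succ_of_le (hb x hx).2), by simpa using hlen, ?_⟩
  rw [List.map_pmap]
  simp

lemma pkBal_finite (n k l m : ℕ) : (pkBal n k l m).Finite :=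
  (pkAll_finite n l m).subset (fun _ h => h.1)

lemma sorted_le_getLast : ∀ (a : List ℕ) (h : a ≠ []), a.Pairwise (· ≤ ·) →
    ∀ x ∈ a, x ≤ a.getLast h := by
  intro a
  induction a with
  | nil => simp
  | cons y t ih =>
    intro h hs x hx
    cases t with
    | nil =>
      simp only [List.mem_singleton] at hx
      subst hx
      simp [List.getLast]
    | cons z t' =>
      rw [List.getLast_cons (by simp)]
      rcases List.mem_cons.1 hx with rfl | hx'
      · exact List.rel_of_pairwise_cons hs (List.getLast_mem (by simp))
      · exact ih (by simp) hs.of_cons x hx'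

lemma head?_append_ne (b c : List ℕ) (hb : b ≠ []) : (b ++ c).head? = b.head? := by
  cases b with
  | nil => exact absurd rfl hb
  | cons y t => simp

lemma pkBal_rec (n k l m : ℕ) (hn : 2 ≤ n) (hm : 1 ≤ m) (hml : m < l) (hl : l ≤ n + k) :
    (pkBal n k l m).ncard = (pkBal n k (l - 1) m).ncard + (pkBal (n - 1) k l m).ncard := by
  have hsplit : pkBal n k l m = pkBal n k (l - 1) m ∪ ((· ++ [l]) '' pkBal (n - 1) k l m) := by
    ext a
    constructor
    · rintro ⟨⟨hlen, hsort, hbnd, hhead⟩, hcond⟩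
      by_cases hla : l ∈ a
      · right
        have hne : a ≠ [] := by
          intro h
          rw [h] at hlen
          simp at hlen
          omega
        have hgl : a.getLast hne = l :=
          le_antisymm ((hbnd _ (List.getLast_mem hne)).2) (sorted_le_getLast a hne hsort l hla)
        have hrepr : a.dropLast ++ [l] = a := by
          conv_rhs => rw [← List.dropLast_append_getLast hne]
          rw [hgl]
        have hlen' : a.dropLast.length = n - 1 := by rw [List.length_dropLast, hlen]
        have hne2 : a.dropLast ≠ [] := by
          intro h
          have := congrArg List.length h
          rw [hlen'] at this
          simp at this
          omega
        refine ⟨a.dropLast, ⟨⟨hlen', ?_, ?_, ?_⟩, ?_⟩, hrepr⟩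
        · exact List.Pairwise.sublist (List.dropLast_sublist a) hsort
        · exact fun x hx => hbnd x ((List.dropLast_sublist a).subset hx)
        · rw [← head?_append_ne a.dropLast [l] hne2, hrepr]
          exact hhead
        · intro p hp1 hp2
          have h1 := hcond p hp1 hp2
          have h2 : cntGe p a = cntGe p a.dropLast + 1 := by
            conv_lhs => rw [← hrepr]
            rw [cntGe_append, cntGe_singleton, if_pos hp2]
          omega
      · left
        refine ⟨⟨hlen, hsort, fun x hx => ⟨(hbnd x hx).1, ?_⟩, hhead⟩, ?_⟩
        · have h1 := (hbnd x hx).2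
          have h2 : x ≠ l := fun h => hla (h ▸ hx)
          omega
        · intro p hp1 hp2
          exact hcond p hp1 (by omega)
    · rintro (⟨⟨hlen, hsort, hbnd, hhead⟩, hcond⟩ | ⟨b, ⟨⟨hlen, hsort, hbnd, hhead⟩, hcond⟩, rfl⟩)
      · refine ⟨⟨hlen, hsort, fun x hx => ⟨(hbnd x hx).1, by have := (hbnd x hx).2; omega⟩,
          hhead⟩, ?_⟩
        intro p hp1 hp2
        rcases (by omega : p ≤ l - 1 ∨ p = l) with h | rfl
        · exact hcond p hp1 h
        · have hz : cntGe p a = 0 := cntGe_zero p a (fun x hx => by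
            have := (hbnd x hx).2
            omega)
          omega
      · have hne2 : b ≠ [] := by
          intro h
          rw [h] at hlen
          simp at hlen
          omega
        refine ⟨⟨?_, ?_, ?_, ?_⟩, ?_⟩
        · rw [List.length_append, hlen]
          simp
          omega
        · refine List.pairwise_append.2 ⟨hsort, by simp, ?_⟩
          intro x hx y hy
          simp only [List.mem_singleton] at hy
          subst hy
          exact (hbnd x hx).2
        · intro x hx
          rcases List.mem_append.1 hx with h | h
          · exact ⟨(hbnd x h).1, (hbnd x h).2⟩
          · simp only [List.mem_singleton] at h
            subst h
            exact ⟨by omega, le_rfl⟩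
        · rw [head?_append_ne b [l] hne2]
          exact hhead
        · intro p hp1 hp2
          have h1 := hcond p hp1 hp2
          rw [cntGe_append, cntGe_singleton, if_pos hp2]
          omega
  have hdisj : Disjoint (pkBal n k (l - 1) m) ((· ++ [l]) '' pkBal (n - 1) k l m) := by
    rw [Set.disjoint_left]
    rintro a ⟨⟨_, _, hbnd, _⟩, -⟩ ⟨b, -, rfl⟩
    have : l ∈ b ++ [l] := by simp
    have := (hbnd l this).2
    omega
  rw [hsplit, Set.ncard_union_eq hdisj (pkBal_finite _ _ _ _)
    ((pkBal_finite _ _ _ _).image _),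
    Set.ncard_image_of_injective _ (List.append_left_injective [l])]

lemma chooseInt_neg (a : ℕ) {b : ℤ} (h : b < 0) : chooseInt a b = 0 := by
  unfold chooseInt
  rw [if_neg (by omega)]

lemma chooseInt_coe (a b' : ℕ) : chooseInt a ((b' : ℕ) : ℤ) = a.choose b' := by
  unfold chooseInt
  rw [if_pos (Int.ofNat_nonneg b')]
  simp

lemma chooseInt_pascal (a : ℕ) (b : ℤ) :
    chooseInt (a + 1) b = chooseInt a (b - 1) + chooseInt a b := by
  rcases lt_trichotomy b 0 with h | h | h
  · rw [chooseInt_neg _ h, chooseInt_neg _ (by omega), chooseInt_neg _ h]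
  · subst h
    norm_num [chooseInt]
  · obtain ⟨c, rfl⟩ : ∃ c : ℕ, b = (c : ℤ) + 1 := ⟨(b - 1).toNat, by omega⟩
    rw [show ((c : ℤ) + 1) - 1 = ((c : ℕ) : ℤ) by ring]
    rw [show ((c : ℤ) + 1) = (((c + 1 : ℕ) : ℕ) : ℤ) by push_cast; ring]
    rw [chooseInt_coe, chooseInt_coe, chooseInt_coe]
    exact Nat.choose_succ_succ' a c

theorem pkBal_card : ∀ (Nb n k l m : ℕ), n + l ≤ Nb → 1 ≤ n → 1 ≤ m → m ≤ k → m ≤ l →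
    l ≤ n + k + 1 →
    (pkBal n k l m).ncard + chooseInt (n + l - m - 1) ((l : ℤ) - k - 2)
      = (n + l - m - 1).choose (n - 1) := by
  intro Nb
  induction Nb with
  | zero => intro n k l m h hn hm _ _ _; omega
  | succ Nb ih =>
    intro n k l m hN hn hm hmk hml hl
    by_cases htop : l = n + k + 1
    · have hempty : pkBal n k l m = ∅ := by
        ext a
        simp only [Set.mem_empty_iff_false, iff_false]
        rintro ⟨⟨hlen, hsort, hbnd, hhead⟩, hcond⟩
        have := hcond l (by omega) le_rfl
        omega
      rw [hempty, Set.ncard_empty, zero_add]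
      have hcast : ((l : ℤ) - k - 2) = (((n - 1 : ℕ) : ℕ) : ℤ) := by omega
      rw [hcast, chooseInt_coe]
    · by_cases hn1 : n = 1
      · subst hn1
        have hlk : l ≤ k + 1 := by omega
        have hset : pkBal 1 k l m = {[m]} := by
          ext a
          simp only [Set.mem_singleton_iff]
          constructor
          · rintro ⟨⟨hlen, hsort, hbnd, hhead⟩, hcond⟩
            obtain ⟨y, rfl⟩ := List.length_eq_one_iff.1 hlen
            simp only [List.head?_cons, Option.some.injEq] at hhead
            rw [hhead]
          · rintro rfl
            refine ⟨⟨rfl, by simp, ?_, rfl⟩, ?_⟩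
            · intro x hx
              simp only [List.mem_singleton] at hx
              subst hx
              exact ⟨hm, hml⟩
            · intro p hp1 hp2
              rw [cntGe_singleton]
              by_cases hpm : p ≤ m
              · rw [if_pos hpm]; omega
              · rw [if_neg hpm]; omega
        rw [hset, Set.ncard_singleton]
        rw [chooseInt_neg _ (by omega : ((l : ℤ) - k - 2) < 0)]
        simp
      · by_cases hlm : l = m
        · subst hlm
          have hset : pkBal n k l l = {List.replicate n l} := by
            ext a
            simp only [Set.mem_singleton_iff]
            constructor
            · rintro ⟨⟨hlen, hsort, hbnd, hhead⟩, hcond⟩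
              rw [List.eq_replicate_iff]
              refine ⟨hlen, ?_⟩
              intro b hb
              cases a with
              | nil => simp at hhead
              | cons y t =>
                simp only [List.head?_cons, Option.some.injEq] at hhead
                subst hhead
                rcases List.mem_cons.1 hb with rfl | h
                · rfl
                · have h1 := List.rel_of_pairwise_cons hsort h
                  have h2 := (hbnd b (List.mem_cons_of_mem _ h)).2
                  omega
            · rintro rfl
              refine ⟨⟨by simp, ?_, ?_, ?_⟩, ?_⟩
              · exact List.pairwise_replicate.2 (Or.inr le_rfl)
              · intro x hx
                rw [List.eq_of_mem_replicate hx]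
                exact ⟨by omega, le_rfl⟩
              · cases n with
                | zero => omega
                | succ n' => simp [List.replicate_succ]
              · intro p hp1 hp2
                have h1 := cntGe_le_len p (List.replicate n l)
                rw [List.length_replicate] at h1
                omega
          rw [hset, Set.ncard_singleton]
          rw [chooseInt_neg _ (by omega : ((l : ℤ) - k - 2) < 0)]
          have he : n + l - l - 1 = n - 1 := by omega
          rw [he, Nat.choose_self]
        · have hn2 : 2 ≤ n := by omega
          have hml2 : m < l := by omega
          have hl2 : l ≤ n + k := by omega
          rw [pkBal_rec n k l m hn2 hm hml2 hl2]
          have ih1 := ih n k (l - 1) m (by omega) hn hm hmk (by omega) (by omega)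
          have ih2 := ih (n - 1) k l m (by omega) (by omega) hm hmk hml (by omega)
          have e1 : n + (l - 1) - m - 1 = n + l - m - 2 := by omega
          have e3 : (((l - 1 : ℕ) : ℕ) : ℤ) - k - 2 = (l : ℤ) - k - 3 := by omega
          have e2 : n - 1 + l - m - 1 = n + l - m - 2 := by omega
          have e4 : n - 1 - 1 = n - 2 := by omega
          rw [e1, e3] at ih1
          rw [e2, e4] at ih2
          have hpas1 : (n + l - m - 1).choose (n - 1)
              = (n + l - m - 2).choose (n - 2) + (n + l - m - 2).choose (n - 1) := by
            rw [show n + l - m - 1 = (n + l - m - 2) + 1 by omega,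
              show n - 1 = (n - 2) + 1 by omega, Nat.choose_succ_succ']
          have hpas2 : chooseInt (n + l - m - 1) ((l : ℤ) - k - 2)
              = chooseInt (n + l - m - 2) ((l : ℤ) - k - 3)
                + chooseInt (n + l - m - 2) ((l : ℤ) - k - 2) := by
            rw [show n + l - m - 1 = (n + l - m - 2) + 1 by omega, chooseInt_pascal,
              show (l : ℤ) - k - 2 - 1 = (l : ℤ) - k - 3 by ring]
          omega

lemma pkAll_card (n l m : ℕ) (hn : 1 ≤ n) (hm : 1 ≤ m) (hml : m ≤ l) :
    (pkAll n l m).ncard = (n + l - m - 1).choose (n - 1) := by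
  have hset : pkBal n l l m = pkAll n l m := by
    ext a
    constructor
    · exact fun h => h.1
    · intro h
      refine ⟨h, ?_⟩
      obtain ⟨hlen, -, -, -⟩ := h
      intro p hp1 hp2
      have h1 := cntGe_le_len p a
      rw [hlen] at h1
      omega
  have h2 := pkBal_card (n + l) n l l m le_rfl hn hm hml hml (by omega)
  rw [hset, chooseInt_neg _ (by omega : ((l : ℤ) - l - 2) < 0)] at h2
  omega

lemma pkQ_card (n k l m : ℕ) (hn : 1 ≤ n) (hm : 1 ≤ m) (hmk : m ≤ k) (hml : m ≤ l)
    (hl : l ≤ n + k + 1) :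
    (pkAll n l m \ pkBal n k l m).ncard = chooseInt (n + l - m - 1) ((l : ℤ) - k - 2) := by
  have hsub : pkBal n k l m ⊆ pkAll n l m := fun a h => h.1
  have h1 := Set.ncard_diff_add_ncard_of_subset hsub (pkAll_finite n l m)
  have h2 := pkBal_card (n + l) n k l m le_rfl hn hm hmk hml hl
  have h3 := pkAll_card n l m hn hm hml
  omega

lemma opGeLeLead_eq (n k l m : ℕ) (hk : 1 ≤ k) (hln : l ≤ n) :
    opGeLeLead n k l m = (pkAll n l m \ pkBal n k l m).ncard := by
  unfold opGeLeLead
  congr 1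
  ext a
  simp only [Set.mem_setOf_eq, Set.mem_diff]
  constructor
  · rintro ⟨⟨⟨hlen, hbnd⟩, hsort⟩, hfl, hle, hhead⟩
    have hb' : ∀ x ∈ a, 1 ≤ x ∧ x ≤ l := fun x hx => ⟨(hbnd x hx).1, hle x hx⟩
    refine ⟨⟨hlen, hsort, hb', hhead⟩, ?_⟩
    rintro ⟨-, hcond⟩
    obtain ⟨p, hp1, hp2, hp3⟩ := (flaws_ge_iff n k l a hsort hb' hln hk).1 hfl
    have := hcond p hp1 hp2
    omega
  · rintro ⟨⟨hlen, hsort, hbnd, hhead⟩, hnot⟩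
    have hfl : k ≤ flaws n a := by
      rw [flaws_ge_iff n k l a hsort hbnd hln hk]
      by_contra hc
      push_neg at hc
      apply hnot
      refine ⟨⟨hlen, hsort, hbnd, hhead⟩, ?_⟩
      intro p hp1 hp2
      have := hc p hp1 hp2
      omega
    exact ⟨⟨⟨hlen, fun x hx => ⟨(hbnd x hx).1, le_trans (hbnd x hx).2 hln⟩⟩, hsort⟩, hfl,
      fun x hx => (hbnd x hx).2, hhead⟩

lemma opEq_add (n k l m : ℕ) :
    opEqLeLead n k l m + opGeLeLead n (k + 1) l m = opGeLeLead n k l m := by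
  unfold opEqLeLead opGeLeLead
  have hsub : {a : List ℕ | IsOrderedPrefSet n a ∧ k + 1 ≤ flaws n a ∧ (∀ x ∈ a, x ≤ l) ∧
        a.head? = some m}
      ⊆ {a : List ℕ | IsOrderedPrefSet n a ∧ k ≤ flaws n a ∧ (∀ x ∈ a, x ≤ l) ∧
        a.head? = some m} := by
    rintro a ⟨h1, h2, h3, h4⟩
    exact ⟨h1, by omega, h3, h4⟩
  have hfin : {a : List ℕ | IsOrderedPrefSet n a ∧ k ≤ flaws n a ∧ (∀ x ∈ a, x ≤ l) ∧
      a.head? = some m}.Finite := by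
    apply (pkAll_finite n l m).subset
    rintro a ⟨⟨⟨hlen, hbnd⟩, hsort⟩, -, hle, hhead⟩
    exact ⟨hlen, hsort, fun x hx => ⟨(hbnd x hx).1, hle x hx⟩, hhead⟩
  have heq : {a : List ℕ | IsOrderedPrefSet n a ∧ flaws n a = k ∧ (∀ x ∈ a, x ≤ l) ∧
        a.head? = some m}
      = {a : List ℕ | IsOrderedPrefSet n a ∧ k ≤ flaws n a ∧ (∀ x ∈ a, x ≤ l) ∧
          a.head? = some m}
        \ {a : List ℕ | IsOrderedPrefSet n a ∧ k + 1 ≤ flaws n a ∧ (∀ x ∈ a, x ≤ l) ∧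
          a.head? = some m} := by
    ext a
    simp only [Set.mem_setOf_eq, Set.mem_diff]
    constructor
    · rintro ⟨h1, h2, h3, h4⟩
      exact ⟨⟨h1, by omega, h3, h4⟩, by rintro ⟨-, h5, -, -⟩; omega⟩
    · rintro ⟨⟨h1, h2, h3, h4⟩, hnot⟩
      refine ⟨h1, ?_, h3, h4⟩
      by_contra hne
      exact hnot ⟨h1, by omega, h3, h4⟩
  rw [heq]
  exact Set.ncard_diff_add_ncard_of_subset hsub hfin
theorem stmt9 (n k l m : ℕ) (hm : 1 ≤ m) (hmk : m ≤ k) (hl : k + 1 ≤ l) (hn : l ≤ n) :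
    (n - m + k + 2) * opEqLeLead n k l m
      = (n - l + 2 * k - m + 4) * chooseInt (n + l - m - 1) ((l : ℤ) - k - 2) := by
  have hk1 : 1 ≤ k := le_trans hm hmk
  have hn1 : 1 ≤ n := by omega
  have hGk : opGeLeLead n k l m = chooseInt (n + l - m - 1) ((l : ℤ) - k - 2) := by
    rw [opGeLeLead_eq n k l m hk1 hn, pkQ_card n k l m hn1 hm hmk (by omega) (by omega)]
  have hGk1 : opGeLeLead n (k + 1) l m = chooseInt (n + l - m - 1) ((l : ℤ) - k - 3) := by
    rw [opGeLeLead_eq n (k + 1) l m (by omega) hn,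
      pkQ_card n (k + 1) l m hn1 hm (by omega) (by omega) (by omega)]
    congr 1
    push_cast
    ring
  have hE1 := opEq_add n k l m
  rw [hGk, hGk1] at hE1
  by_cases hcase : l = k + 1
  · have hX : chooseInt (n + l - m - 1) ((l : ℤ) - k - 2) = 0 := chooseInt_neg _ (by omega)
    have hY : chooseInt (n + l - m - 1) ((l : ℤ) - k - 3) = 0 := chooseInt_neg _ (by omega)
    rw [hX, hY] at hE1
    rw [hX, mul_zero]
    have hz : opEqLeLead n k l m = 0 := by omega
    rw [hz, mul_zero]
  · have hlk2 : k + 2 ≤ l := by omega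
    set r := l - k - 2 with hr
    have hXe : chooseInt (n + l - m - 1) ((l : ℤ) - k - 2) = (n + l - m - 1).choose r := by
      rw [show ((l : ℤ) - k - 2) = ((r : ℕ) : ℤ) by omega, chooseInt_coe]
    by_cases hr0 : r = 0
    · have hYe : chooseInt (n + l - m - 1) ((l : ℤ) - k - 3) = 0 := chooseInt_neg _ (by omega)
      rw [hYe] at hE1
      have hEeq : opEqLeLead n k l m = chooseInt (n + l - m - 1) ((l : ℤ) - k - 2) := by omega
      rw [hEeq]
      have hco : n - m + k + 2 = n - l + 2 * k - m + 4 := by omega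
      rw [hco]
    · have hr1 : 1 ≤ r := by omega
      have hYe : chooseInt (n + l - m - 1) ((l : ℤ) - k - 3)
          = (n + l - m - 1).choose (r - 1) := by
        rw [show ((l : ℤ) - k - 3) = (((r - 1 : ℕ)) : ℤ) by omega, chooseInt_coe]
      rw [hXe, hYe] at hE1
      have hkey := Nat.choose_succ_right_eq (n + l - m - 1) (r - 1)
      rw [show (r - 1) + 1 = r by omega] at hkey
      have hA' : (n + l - m - 1) - (r - 1) = n - m + k + 2 := by omega
      rw [hA'] at hkey
      have hB : n - m + k + 2 = (n - l + 2 * k - m + 4) + r := by omega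
      have hk2 : r * (n + l - m - 1).choose r
          = (n - m + k + 2) * (n + l - m - 1).choose (r - 1) := by
        calc r * (n + l - m - 1).choose r = (n + l - m - 1).choose r * r := mul_comm _ _
          _ = (n + l - m - 1).choose (r - 1) * (n - m + k + 2) := hkey
          _ = (n - m + k + 2) * (n + l - m - 1).choose (r - 1) := mul_comm _ _
      have h1 : (n - m + k + 2) * opEqLeLead n k l m
            + (n - m + k + 2) * (n + l - m - 1).choose (r - 1)
          = (n - m + k + 2) * (n + l - m - 1).choose r := by
        rw [← Nat.mul_add, hE1]
      have h2 : (n - m + k + 2) * (n + l - m - 1).choose r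
          = (n - l + 2 * k - m + 4) * (n + l - m - 1).choose r
            + (n - m + k + 2) * (n + l - m - 1).choose (r - 1) := by
        calc (n - m + k + 2) * (n + l - m - 1).choose r
            = ((n - l + 2 * k - m + 4) + r) * (n + l - m - 1).choose r := by rw [← hB]
          _ = (n - l + 2 * k - m + 4) * (n + l - m - 1).choose r
              + r * (n + l - m - 1).choose r := by ring
          _ = (n - l + 2 * k - m + 4) * (n + l - m - 1).choose r
              + (n - m + k + 2) * (n + l - m - 1).choose (r - 1) := by rw [hk2]
      rw [hXe]
      exact Nat.add_right_cancel (h1.trans h2)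
end

section
/- For integers k ≥ 0 and n ≥ k+1, the number op_{n,k}^{k+1} of ordered preference sets of length n with exactly k flaws and leading term k+1 satisfies (n+1) · op_{n,k}^{k+1} = (k+2) · C(2n−k−1, n−k−1). -/
namespace Stmt10Aux

/-- Simplified parking run on sorted lists: state is the first potentially
free spot `q` at/above the current preference level. -/
def run (n : ℕ) : List ℕ → ℕ → ℕ
  | [], _ => 0
  | a :: rest, q => if max a q ≤ n then run n rest (max a q + 1) else run n rest q + 1

lemma find?_range' (occ : Finset ℕ) (q : ℕ) :
    ∀ (m p : ℕ), (∀ j, p ≤ j → (j ∈ occ ↔ j < q)) →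
      (List.range' p m).find? (fun j => decide (j ∉ occ)) =
        if max p q < p + m then some (max p q) else none := by
  intro m
  induction m with
  | zero =>
    intro p h
    simp only [List.range'_zero, List.find?_nil, Nat.add_zero]
    rw [if_neg]
    exact fun hlt => absurd hlt (by simp [Nat.le_max_left p q])
  | succ m ih =>
    intro p h
    rw [List.range'_succ]
    by_cases hpq : q ≤ p
    · have hpo : p ∉ occ := fun hp => by have := (h p le_rfl).mp hp; omega
      rw [List.find?_cons_of_pos (p := fun j => decide (j ∉ occ)) (a := p) (by simpa using hpo)]
      rw [max_eq_left hpq, if_pos (by omega)]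
    · have hpo : p ∈ occ := (h p le_rfl).mpr (by omega)
      rw [List.find?_cons_of_neg (p := fun j => decide (j ∉ occ)) (a := p) (by simpa using hpo)]
      rw [ih (p + 1) (fun j hj => h j (by omega))]
      have h1 : max (p + 1) q = max p q := by omega
      rw [h1]
      have h2 : p + 1 + m = p + (m + 1) := by omega
      rw [h2]

lemma firstFree_eq (n : ℕ) (occ : Finset ℕ) (a q : ℕ)
    (h : ∀ j, a ≤ j → (j ∈ occ ↔ j < q)) :
    firstFree n occ a = if max a q ≤ n then some (max a q) else none := by
  unfold firstFree
  rw [find?_range' occ q _ a h]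
  by_cases hc : max a q ≤ n
  · rw [if_pos (by omega), if_pos hc]
  · rw [if_neg (by omega), if_neg hc]

lemma flawsFrom_eq_run (n : ℕ) :
    ∀ (l : List ℕ) (occ : Finset ℕ) (q : ℕ), l.Pairwise (· ≤ ·) →
      (∀ x ∈ l, ∀ j, x ≤ j → (j ∈ occ ↔ j < q)) →
      flawsFrom n l occ = run n l q := by
  intro l
  induction l with
  | nil => intro occ q _ _; rfl
  | cons a rest ih =>
    intro occ q hs hinv
    have ha := hinv a List.mem_cons_self
    have hs' := List.pairwise_cons.mp hs
    rw [flawsFrom, firstFree_eq n occ a q ha, run]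
    by_cases hc : max a q ≤ n
    · rw [if_pos hc, if_pos hc]
      apply ih _ _ hs'.2
      intro x hx j hj
      have hax : a ≤ x := hs'.1 x hx
      have h2 := hinv x (List.mem_cons_of_mem a hx) j hj
      simp only [Finset.mem_insert]
      constructor
      · intro hj'; rcases hj' with h3 | h3
        · omega
        · have := h2.mp h3; omega
      · intro hj'
        by_cases h3 : j = max a q
        · exact Or.inl h3
        · exact Or.inr (h2.mpr (by omega))
    · rw [if_neg hc, if_neg hc]
      show flawsFrom n rest occ + 1 = run n rest q + 1
      congr 1
      apply ih _ _ hs'.2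
      intro x hx j hj
      exact hinv x (List.mem_cons_of_mem a hx) j hj

lemma flaws_eq_run (n : ℕ) (a : List ℕ) (hs : a.Pairwise (· ≤ ·))
    (h1 : ∀ x ∈ a, 1 ≤ x) : flaws n a = run n a 1 := by
  apply flawsFrom_eq_run n a ∅ 1 hs
  intro x hx j hj
  have := h1 x hx
  simp only [Finset.notMem_empty, false_iff]
  omega

lemma run_all_flaw (n : ℕ) : ∀ (l : List ℕ) (q : ℕ), n < q → run n l q = l.length := by
  intro l
  induction l with
  | nil => intro q _; rfl
  | cons a rest ih =>
    intro q hq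
    rw [run, if_neg (by omega), ih q hq, List.length_cons]

lemma run_eq_of_le (n : ℕ) : ∀ (l : List ℕ) (q : ℕ), q ≤ n + 1 →
    (∀ i (h : i < l.length), l[i] ≤ q + i) →
    run n l q = l.length - (n + 1 - q) := by
  intro l
  induction l with
  | nil => intro q _ _; simp [run]
  | cons a rest ih =>
    intro q hq hcap
    have ha : a ≤ q := by
      have := hcap 0 (by simp); simp only [List.getElem_cons_zero] at this; exact this
    by_cases hc : q ≤ n
    · rw [run, if_pos (by omega), max_eq_right ha]
      rw [ih (q + 1) (by omega) (fun i hi => by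
        have := hcap (i + 1) (by simpa using hi)
        simp only [List.getElem_cons_succ] at this
        omega)]
      simp only [List.length_cons]
      omega
    · rw [run, if_neg (by omega), run_all_flaw n rest q (by omega)]
      simp only [List.length_cons]
      omega

lemma run_mono (n : ℕ) : ∀ (l : List ℕ) (q q' : ℕ), q ≤ q' →
    run n l q ≤ run n l q' := by
  intro l
  induction l with
  | nil => intro q q' _; exact le_rfl
  | cons a rest ih =>
    intro q q' hqq
    rw [run, run]
    by_cases hc : max a q ≤ n
    · by_cases hc' : max a q' ≤ n
      · rw [if_pos hc, if_pos hc']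
        exact ih _ _ (by omega)
      · rw [if_pos hc, if_neg hc']
        exact le_trans (ih _ _ (by omega)) (Nat.le_succ _)
    · rw [if_neg hc, if_neg (by omega)]
      exact Nat.succ_le_succ (ih _ _ hqq)

lemma run_cons_le (n : ℕ) (a : ℕ) (rest : List ℕ) (q : ℕ) :
    run n rest q ≤ run n (a :: rest) q := by
  rw [run]
  by_cases hc : max a q ≤ n
  · rw [if_pos hc]; exact run_mono n rest q _ (by omega)
  · rw [if_neg hc]; exact Nat.le_succ_of_le le_rfl

lemma run_drop (n : ℕ) : ∀ (i : ℕ) (l : List ℕ) (q : ℕ),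
    run n (l.drop i) q ≤ run n l q := by
  intro i
  induction i with
  | zero => intro l q; exact le_rfl
  | succ i ih =>
    intro l q
    cases l with
    | nil => exact le_rfl
    | cons a rest => exact le_trans (ih rest q) (run_cons_le n a rest q)

lemma run_lb (n : ℕ) : ∀ (l : List ℕ) (q p : ℕ), q ≤ n + 1 → p ≤ n + 1 →
    (∀ x ∈ l, p ≤ x) → l.length + max q p ≤ run n l q + (n + 1) := by
  intro l
  induction l with
  | nil => intro q p hq hp _; simp [run]; omega
  | cons a rest ih =>
    intro q p hq hp hlow
    have ha : p ≤ a := hlow a List.mem_cons_self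
    rw [run]
    by_cases hc : max a q ≤ n
    · rw [if_pos hc]
      have := ih (max a q + 1) p (by omega) hp
        (fun x hx => hlow x (List.mem_cons_of_mem a hx))
      simp only [List.length_cons]
      omega
    · rw [if_neg hc]
      have := ih q p hq hp (fun x hx => hlow x (List.mem_cons_of_mem a hx))
      simp only [List.length_cons]
      omega

lemma chooseInt_ofNat (a b : ℕ) : chooseInt a (b : ℤ) = a.choose b := by
  simp [chooseInt]

lemma chooseInt_eq_zero {a : ℕ} {b : ℤ} (h : (a : ℤ) < b) : chooseInt a b = 0 := by
  rw [chooseInt, if_pos (by omega)]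
  exact Nat.choose_eq_zero_of_lt (by omega)

lemma chooseInt_pascal (a : ℕ) (b : ℤ) :
    chooseInt (a + 1) b = chooseInt a (b - 1) + chooseInt a b := by
  rcases lt_trichotomy b 0 with hb | hb | hb
  · rw [chooseInt, if_neg (by omega), chooseInt, if_neg (by omega),
      chooseInt, if_neg (by omega)]
  · subst hb
    rw [chooseInt, if_pos le_rfl, chooseInt, if_neg (by omega), chooseInt, if_pos le_rfl]
    simp
  · obtain ⟨c, rfl⟩ : ∃ c : ℕ, b = (c : ℤ) + 1 := ⟨(b - 1).toNat, by omega⟩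
    have h1 : ((c : ℤ) + 1) - 1 = (c : ℤ) := by ring
    rw [h1, chooseInt_ofNat]
    have h2 : ((c : ℤ) + 1) = ((c + 1 : ℕ) : ℤ) := by push_cast; ring
    rw [h2, chooseInt_ofNat, chooseInt_ofNat]
    exact Nat.choose_succ_succ a c

/-- The Finset of sorted lists of length `L` with entries in `[lo, n]` that are
bounded by the shifted staircase `i ↦ min (q + i) n`. -/
def TF (n : ℕ) : ℕ → ℕ → ℕ → Finset (List ℕ)
  | 0, _, _ => {[]}
  | L + 1, lo, q =>
      (Finset.Icc lo (min q n)).biUnion fun v => (TF n L v (q + 1)).image (List.cons v)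

lemma mem_TF (n : ℕ) : ∀ (L lo q : ℕ) (l : List ℕ),
    l ∈ TF n L lo q ↔ l.length = L ∧ l.Pairwise (· ≤ ·) ∧ (∀ x ∈ l, lo ≤ x) ∧
      ∀ i (h : i < l.length), l[i] ≤ min (q + i) n := by
  intro L
  induction L with
  | zero =>
    intro lo q l
    simp only [TF, Finset.mem_singleton]
    constructor
    · rintro rfl
      exact ⟨rfl, List.Pairwise.nil, by simp, by simp⟩
    · rintro ⟨hl, -, -, -⟩
      exact List.eq_nil_of_length_eq_zero hl
  | succ L ih =>
    intro lo q l
    simp only [TF, Finset.mem_biUnion, Finset.mem_image, Finset.mem_Icc]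
    constructor
    · rintro ⟨v, ⟨hlov, hvmin⟩, t, ht, rfl⟩
      obtain ⟨hlen, hsort, hlow, hcap⟩ := (ih v (q + 1) t).mp ht
      refine ⟨by simp [hlen], ?_, ?_, ?_⟩
      · exact List.pairwise_cons.mpr ⟨fun b hb => hlow b hb, hsort⟩
      · intro x hx
        rcases List.mem_cons.mp hx with rfl | hx
        · exact hlov
        · exact le_trans hlov (hlow x hx)
      · intro i hi
        cases i with
        | zero => simpa using hvmin
        | succ i =>
          simp only [List.getElem_cons_succ]
          have := hcap i (by simpa using hi)
          have h1 : q + 1 + i = q + (i + 1) := by omega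
          rwa [h1] at this
    · rintro ⟨hlen, hsort, hlow, hcap⟩
      cases l with
      | nil => simp at hlen
      | cons v t =>
        have hs' := List.pairwise_cons.mp hsort
        refine ⟨v, ⟨hlow v List.mem_cons_self, by
            have := hcap 0 (by simp); simp only [List.getElem_cons_zero] at this; exact this⟩,
          t, (ih v (q + 1) t).mpr ⟨by simpa using hlen, hs'.2, hs'.1, ?_⟩, rfl⟩
        intro i hi
        have := hcap (i + 1) (by simpa using hi)
        simp only [List.getElem_cons_succ] at this
        have h1 : q + (i + 1) = q + 1 + i := by omega
        rwa [h1] at this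

lemma card_TF_succ (n L lo q : ℕ) :
    (TF n (L + 1) lo q).card = ∑ v ∈ Finset.Icc lo (min q n), (TF n L v (q + 1)).card := by
  show (Finset.biUnion _ _).card = _
  rw [Finset.card_biUnion]
  · exact Finset.sum_congr rfl fun v _ =>
      Finset.card_image_of_injective _ (fun a b hab => by simpa using hab)
  · intro v _ w _ hvw
    rw [Function.onFun, Finset.disjoint_left]
    rintro x hx hx'
    obtain ⟨t, -, rfl⟩ := Finset.mem_image.mp hx
    obtain ⟨s, -, heq⟩ := Finset.mem_image.mp hx'
    have h2 : w = v := by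
      have h3 := congrArg List.head? heq
      simpa using h3
    exact hvw h2.symm

lemma telescope (f t : ℕ → ℕ) : ∀ (V lo : ℕ), lo ≤ V + 1 →
    (∀ v, lo ≤ v → v ≤ V → f v = t v + f (v + 1)) →
    (∑ v ∈ Finset.Icc lo V, t v) + f (V + 1) = f lo := by
  intro V
  induction V with
  | zero =>
    intro lo hlo h
    interval_cases lo
    · simp only [Finset.Icc_self, Finset.sum_singleton]
      exact (h 0 le_rfl le_rfl).symm
    · simp [Finset.Icc_eq_empty_of_lt]
  | succ V ih =>
    intro lo hlo h
    by_cases hlo' : lo ≤ V + 1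
    · rw [Finset.sum_Icc_succ_top hlo']
      have h1 := h (V + 1) hlo' le_rfl
      have h2 := ih lo hlo' (fun v hv hv' => h v hv (by omega))
      omega
    · have hlo2 : lo = V + 2 := by omega
      subst hlo2
      rw [Finset.Icc_eq_empty_of_lt (by omega), Finset.sum_empty, Nat.zero_add]

lemma NT (n : ℕ) : ∀ (L lo q : ℕ), lo ≤ n → lo ≤ q → n ≤ L + q →
    (TF n L lo q).card + chooseInt (L + n - lo) ((L : ℤ) + q - lo + 1)
      = (L + n - lo).choose L := by
  intro L
  induction L with
  | zero =>
    intro lo q h1 h2 h3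
    have hc : (TF n 0 lo q).card = 1 := by simp [TF]
    rw [hc, chooseInt_eq_zero (by push_cast; omega)]
    simp
  | succ L ih =>
    intro lo q h1 h2 h3
    have hloV : lo ≤ min q n := by omega
    rw [card_TF_succ]
    have HG := telescope (fun v => (L + 1 + n - v).choose (L + 1))
      (fun v => (L + n - v).choose L) (min q n) lo (by omega)
      (fun v hv hv' => by
        beta_reduce
        have e1 : L + 1 + n - v = (L + n - v) + 1 := by omega
        have e2 : L + 1 + n - (v + 1) = L + n - v := by omega
        rw [e1, Nat.choose_succ_succ, e2])
    have HF := telescope (fun v => chooseInt (L + 1 + n - v) ((L : ℤ) + 1 + ↑q - ↑v + 1))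
      (fun v => chooseInt (L + n - v) ((L : ℤ) + ↑q + 2 - ↑v)) (min q n) lo (by omega)
      (fun v hv hv' => by
        beta_reduce
        have e1 : L + 1 + n - v = (L + n - v) + 1 := by omega
        have e2 : L + 1 + n - (v + 1) = L + n - v := by omega
        have e3 : (L : ℤ) + 1 + ↑q - ↑v + 1 - 1 = (L : ℤ) + 1 + ↑q - ↑(v + 1) + 1 := by
          push_cast; ring
        have e4 : (L : ℤ) + 1 + ↑q - ↑v + 1 = (L : ℤ) + ↑q + 2 - ↑v := by
          push_cast; ring
        rw [e1, chooseInt_pascal, e2, e3, e4, Nat.add_comm])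
    have Hterm : ∀ v ∈ Finset.Icc lo (min q n), (TF n L v (q + 1)).card
        + chooseInt (L + n - v) ((L : ℤ) + ↑q + 2 - ↑v) = (L + n - v).choose L := by
      intro v hv
      rw [Finset.mem_Icc] at hv
      have h0 := ih v (q + 1) (by omega) (by omega) (by omega)
      have e : (L : ℤ) + ↑(q + 1) - ↑v + 1 = (L : ℤ) + ↑q + 2 - ↑v := by push_cast; ring
      rwa [e] at h0
    have Hsum : (∑ v ∈ Finset.Icc lo (min q n), (TF n L v (q + 1)).card)
        + (∑ v ∈ Finset.Icc lo (min q n), chooseInt (L + n - v) ((L : ℤ) + ↑q + 2 - ↑v))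
        = ∑ v ∈ Finset.Icc lo (min q n), (L + n - v).choose L := by
      rw [← Finset.sum_add_distrib]
      exact Finset.sum_congr rfl Hterm
    have Hrem : chooseInt (L + 1 + n - (min q n + 1)) ((L : ℤ) + 1 + ↑q - ↑(min q n + 1) + 1)
        = (L + 1 + n - (min q n + 1)).choose (L + 1) := by
      by_cases hq : q ≤ n
      · have hVq : min q n = q := by omega
        have e : (L : ℤ) + 1 + ↑q - ↑(min q n + 1) + 1 = ((L + 1 : ℕ) : ℤ) := by
          push_cast; omega
        rw [e, chooseInt_ofNat]
      · have hVn : min q n = n := by omega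
        have e1 : L + 1 + n - (min q n + 1) = L := by omega
        rw [e1, chooseInt_eq_zero (by push_cast; omega),
          Nat.choose_eq_zero_of_lt (by omega)]
    have egoal : ((L + 1 : ℕ) : ℤ) + ↑q - ↑lo + 1 = (L : ℤ) + 1 + ↑q - ↑lo + 1 := by
      push_cast; ring
    rw [egoal]
    beta_reduce at HG HF
    rw [Hrem] at HF
    omega

lemma set_eq (n k : ℕ) (hn : k + 1 ≤ n) :
    {a : List ℕ | IsOrderedPrefSet n a ∧ flaws n a = k ∧ a.head? = some (k + 1)}
      = ↑(TF n n (k + 1) (k + 1)) := by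
  ext a
  simp only [Set.mem_setOf_eq, Finset.mem_coe, mem_TF]
  constructor
  · rintro ⟨⟨⟨hlen, hmem⟩, hsort⟩, hfl, hhead⟩
    refine ⟨hlen, hsort, ?_, ?_⟩
    · cases a with
      | nil => simp at hhead
      | cons v t =>
        have hv : v = k + 1 := by simpa using hhead
        subst hv
        intro x hx
        rcases List.mem_cons.mp hx with rfl | hx
        · exact le_rfl
        · exact (List.pairwise_cons.mp hsort).1 x hx
    · intro i hi
      have hne : a[i] ≤ n := (hmem a[i] (List.getElem_mem hi)).2
      refine le_min ?_ hne
      by_contra hcon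
      push_neg at hcon
      have hrun := flaws_eq_run n a hsort (fun x hx => (hmem x hx).1)
      have hmono : ∀ x ∈ a.drop i, a[i] ≤ x := by
        intro x hx
        obtain ⟨j, hj, rfl⟩ := List.mem_iff_getElem.mp hx
        rw [List.getElem_drop]
        rcases Nat.eq_zero_or_pos j with h0 | h0
        · subst h0; simp
        · exact (List.pairwise_iff_getElem.mp hsort) i (i + j)
            (by omega) (by rw [List.length_drop] at hj; omega) (by omega)
      have hlb := run_lb n (a.drop i) 1 (a[i]) (by omega) (by omega) hmono
      have hdrop := run_drop n i a 1
      have hld : (a.drop i).length = a.length - i := List.length_drop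
      have hmax : max 1 (a[i]'hi) = a[i]'hi := by omega
      rw [hmax] at hlb
      rw [hrun] at hfl
      rw [hlen] at hi
      omega
  · rintro ⟨hlen, hsort, hlow, hcap⟩
    have hle : ∀ x ∈ a, 1 ≤ x ∧ x ≤ n := by
      intro x hx
      obtain ⟨i, hi, rfl⟩ := List.mem_iff_getElem.mp hx
      have h2 := hcap i hi
      have h3 := hlow _ hx
      omega
    refine ⟨⟨⟨hlen, hle⟩, hsort⟩, ?_, ?_⟩
    · rw [flaws_eq_run n a hsort (fun x hx => (hle x hx).1)]
      cases a with
      | nil => simp only [List.length_nil] at hlen; omega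
      | cons v t =>
        have hv : v = k + 1 := by
          have h1 := hlow v List.mem_cons_self
          have h2 := hcap 0 (by simp)
          simp only [List.getElem_cons_zero] at h2
          omega
        subst hv
        rw [run]
        have hm : max (k + 1) 1 = k + 1 := by omega
        rw [hm, if_pos hn]
        rw [run_eq_of_le n t (k + 2) (by omega) (fun i hi' => by
          have h2 := hcap (i + 1) (by simpa using hi')
          simp only [List.getElem_cons_succ] at h2
          omega)]
        have hlt : t.length + 1 = n := by simpa using hlen
        omega
    · cases a with
      | nil => rw [← hlen] at hn; simp at hn
      | cons v t =>
        have h1 := hlow v List.mem_cons_self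
        have h2 := hcap 0 (by simp)
        simp only [List.getElem_cons_zero] at h2
        have : v = k + 1 := by omega
        simp [this]

end Stmt10Aux

theorem stmt10 (n k : ℕ) (hn : k + 1 ≤ n) :
    (n + 1) * opLead n k (k + 1) = (k + 2) * Nat.choose (2 * n - k - 1) (n - k - 1) := by
  have hcard : opLead n k (k + 1) = (Stmt10Aux.TF n n (k + 1) (k + 1)).card := by
    rw [opLead, Stmt10Aux.set_eq n k hn, Set.ncard_coe_finset]
  have hNT := Stmt10Aux.NT n n (k + 1) (k + 1) hn le_rfl (by omega)
  have e1 : n + n - (k + 1) = 2 * n - k - 1 := by omega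
  rw [e1] at hNT
  have e2 : (n : ℤ) + ↑(k + 1) - ↑(k + 1) + 1 = ((n + 1 : ℕ) : ℤ) := by push_cast; ring
  rw [e2, Stmt10Aux.chooseInt_ofNat] at hNT
  have hsymm : (2 * n - k - 1).choose (n - k - 1) = (2 * n - k - 1).choose n := by
    have e3 : 2 * n - k - 1 - n = n - k - 1 := by omega
    rw [← e3]
    exact Nat.choose_symm (by omega)
  rw [hsymm, hcard]
  have h1 : (2 * n - k - 1).choose (n + 1) * (n + 1)
      = (2 * n - k - 1).choose n * (2 * n - k - 1 - n) :=
    Nat.choose_succ_right_eq (2 * n - k - 1) n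
  have e3 : 2 * n - k - 1 - n = n - k - 1 := by omega
  rw [e3] at h1
  have h2 : (n + 1) * ((Stmt10Aux.TF n n (k + 1) (k + 1)).card
      + (2 * n - k - 1).choose (n + 1)) = (n + 1) * (2 * n - k - 1).choose n := by
    rw [hNT]
  rw [Nat.mul_add, Nat.mul_comm (n + 1) ((2 * n - k - 1).choose (n + 1)), h1,
    Nat.mul_comm ((2 * n - k - 1).choose n) (n - k - 1)] at h2
  have h4 : (n + 1) * (2 * n - k - 1).choose n
      = (k + 2) * (2 * n - k - 1).choose n + (n - k - 1) * (2 * n - k - 1).choose n := by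
    rw [← Nat.add_mul]
    congr 1
    omega
  rw [h4] at h2
  exact Nat.add_right_cancel h2
end

section
/- For integers 1 ≤ m ≤ k and n ≥ k+1, the number op_{n,k}^m of ordered preference sets of length n with exactly k flaws and leading term m satisfies (2n−m) · op_{n,k}^m = (2k−m+4) · C(2n−m, n−k−2). -/
namespace Stmt11Aux

/-- Pure fold computing the number of failures, tracking the frontier `p`. -/
def gfold (n : ℕ) : List ℕ → ℕ → ℕ
  | [], _ => 0
  | q :: rest, p =>
    if max q (p + 1) ≤ n then gfold n rest (max q (p + 1)) else rest.length + 1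

/-- `ok n t L p`: the first `t` cars of `L` all park, starting from frontier `p`. -/
def ok (n : ℕ) : ℕ → List ℕ → ℕ → Prop
  | 0, _, _ => True
  | _ + 1, [], _ => True
  | t + 1, q :: rest, p => max q (p + 1) ≤ n ∧ ok n t rest (max q (p + 1))

lemma find?_range' (occ : Finset ℕ) (p : ℕ) :
    ∀ (c q : ℕ), (∀ s, q ≤ s → s < q + c → (s ∈ occ ↔ s ≤ p)) →
    (List.range' q c).find? (fun j => decide (j ∉ occ)) =
      if max q (p + 1) < q + c then some (max q (p + 1)) else none := by
  intro c
  induction c with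
  | zero =>
    intro q _
    rw [if_neg]
    · rfl
    · have := le_max_left q (p + 1); omega
  | succ c ih =>
    intro q hq
    rw [List.range'_succ, List.find?_cons]
    by_cases hmem : q ∈ occ
    · have hqp : q ≤ p := (hq q le_rfl (by omega)).mp hmem
      have : (decide (q ∉ occ)) = false := by simp [hmem]
      rw [this]
      rw [ih (q + 1) (fun s hs hs' => hq s (by omega) (by omega))]
      have h1 : max (q + 1) (p + 1) = p + 1 := by omega
      have h2 : max q (p + 1) = p + 1 := by omega
      rw [h1, h2]
      by_cases h : p + 1 < q + (c + 1)
      · rw [if_pos (by omega), if_pos h]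
      · rw [if_neg (by omega), if_neg h]
    · have hqp : ¬ q ≤ p := fun h => hmem ((hq q le_rfl (by omega)).mpr h)
      have : (decide (q ∉ occ)) = true := by simp [hmem]
      rw [this]
      have h2 : max q (p + 1) = q := by omega
      rw [h2, if_pos (by omega)]

lemma firstFree_spec (n : ℕ) (occ : Finset ℕ) (p q : ℕ)
    (hq : ∀ s, q ≤ s → s ≤ n → (s ∈ occ ↔ s ≤ p)) :
    firstFree n occ q = if max q (p + 1) ≤ n then some (max q (p + 1)) else none := by
  unfold firstFree
  by_cases h : q ≤ n
  · have hc : q + (n + 1 - q) = n + 1 := by omega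
    rw [find?_range' occ p (n + 1 - q) q (fun s hs hs' => hq s hs (by omega))]
    by_cases h2 : max q (p + 1) ≤ n
    · rw [if_pos (by omega), if_pos h2]
    · rw [if_neg (by omega), if_neg h2]
  · have hc : n + 1 - q = 0 := by omega
    rw [hc]
    have : ¬ max q (p + 1) ≤ n := by have := le_max_left q (p + 1); omega
    rw [if_neg this]
    rfl

lemma flawsFrom_eq_length (n : ℕ) (occ : Finset ℕ) :
    ∀ L : List ℕ, (∀ x ∈ L, firstFree n occ x = none) → flawsFrom n L occ = L.length := by
  intro L
  induction L with
  | nil => intro _; rfl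
  | cons q rest ih =>
    intro h
    have hq := h q (List.mem_cons_self)
    simp only [flawsFrom, hq]
    rw [ih (fun x hx => h x (List.mem_cons_of_mem _ hx))]
    rfl

lemma flawsFrom_eq_gfold (n : ℕ) :
    ∀ (L : List ℕ) (occ : Finset ℕ) (b p : ℕ),
    L.Pairwise (· ≤ ·) → (∀ x ∈ L, b ≤ x) →
    (∀ s, b ≤ s → s ≤ n → (s ∈ occ ↔ s ≤ p)) →
    flawsFrom n L occ = gfold n L p := by
  intro L
  induction L with
  | nil => intro _ _ _ _ _ _; rfl
  | cons q rest ih =>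
    intro occ b p hsort hge hinv
    have hbq : b ≤ q := hge q (List.mem_cons_self)
    have hrest_sorted : rest.Pairwise (· ≤ ·) := (List.pairwise_cons.mp hsort).2
    have hrest_ge : ∀ x ∈ rest, q ≤ x := (List.pairwise_cons.mp hsort).1
    have hinvq : ∀ s, q ≤ s → s ≤ n → (s ∈ occ ↔ s ≤ p) :=
      fun s hs hs' => hinv s (le_trans hbq hs) hs'
    have hff := firstFree_spec n occ p q hinvq
    by_cases h : max q (p + 1) ≤ n
    · rw [if_pos h] at hff
      simp only [flawsFrom, hff, gfold, if_pos h]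
      apply ih (insert (max q (p + 1)) occ) q (max q (p + 1)) hrest_sorted hrest_ge
      intro s hs hs'
      simp only [Finset.mem_insert]
      constructor
      · rintro (rfl | hso)
        · exact le_rfl
        · have := (hinvq s hs hs').mp hso
          omega
      · intro hsle
        by_cases hsj : s = max q (p + 1)
        · exact Or.inl hsj
        · right
          have hsp : s ≤ p := by omega
          exact (hinvq s hs hs').mpr hsp
    · rw [if_neg h] at hff
      simp only [flawsFrom, hff, gfold, if_neg h]
      rw [flawsFrom_eq_length n occ rest]
      intro x hx
      have hqx : q ≤ x := hrest_ge x hx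
      have hinvx : ∀ s, x ≤ s → s ≤ n → (s ∈ occ ↔ s ≤ p) :=
        fun s hs hs' => hinvq s (le_trans hqx hs) hs'
      rw [firstFree_spec n occ p x hinvx, if_neg (by omega)]

lemma flaws_eq_gfold (n : ℕ) (L : List ℕ) (hsort : L.Pairwise (· ≤ ·))
    (hge : ∀ x ∈ L, 1 ≤ x) : flaws n L = gfold n L 0 := by
  apply flawsFrom_eq_gfold n L ∅ 1 0 hsort hge
  intro s hs _
  simp
  omega

lemma gfold_le_length (n : ℕ) : ∀ (L : List ℕ) (p : ℕ), gfold n L p ≤ L.length := by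
  intro L
  induction L with
  | nil => intro p; simp [gfold]
  | cons q rest ih =>
    intro p
    simp only [gfold]
    split
    · exact le_trans (ih _) (by simp)
    · simp

lemma ok_mono (n : ℕ) : ∀ (L : List ℕ) (t p : ℕ), ok n (t + 1) L p → ok n t L p := by
  intro L
  induction L with
  | nil => intro t p _; cases t <;> trivial
  | cons q rest ih =>
    intro t p h
    obtain ⟨h1, h2⟩ := h
    cases t with
    | zero => trivial
    | succ s => exact ⟨h1, ih s _ h2⟩

lemma ok_bound (n : ℕ) : ∀ (L : List ℕ) (t p : ℕ), ok n (t + 1) L p →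
    t + 1 ≤ L.length → p + (t + 1) ≤ n := by
  intro L
  induction L with
  | nil => intro t p _ hlen; simp at hlen
  | cons q rest ih =>
    intro t p h hlen
    obtain ⟨h1, h2⟩ := h
    cases t with
    | zero => omega
    | succ s =>
      have := ih s (max q (p + 1)) h2 (by simp at hlen ⊢; omega)
      omega

lemma gfold_eq_iff_ok (n : ℕ) (k : ℕ) (hk : 1 ≤ k) :
    ∀ (L : List ℕ) (p : ℕ),
    gfold n L p = k ↔
      k ≤ L.length ∧ ok n (L.length - k) L p ∧ ¬ ok n (L.length - k + 1) L p := by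
  intro L
  induction L with
  | nil =>
    intro p
    simp only [gfold, List.length_nil]
    constructor
    · omega
    · intro ⟨h, _⟩; omega
  | cons q rest ih =>
    intro p
    set r := rest.length with hr
    have hlen : (q :: rest).length = r + 1 := by simp [hr]
    rw [hlen]
    by_cases hc : max q (p + 1) ≤ n
    · simp only [gfold, if_pos hc]
      rcases Nat.lt_trichotomy k (r + 1) with hkr | hkr | hkr
      · -- k ≤ r
        have hk1 : k ≤ r := by omega
        rw [ih (max q (p + 1))]
        have e1 : r + 1 - k = (r - k) + 1 := by omega
        have e2 : r + 1 - k + 1 = (r - k + 1) + 1 := by omega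
        rw [e1]
        constructor
        · rintro ⟨_, h2, h3⟩
          refine ⟨by omega, ⟨hc, h2⟩, ?_⟩
          intro ⟨_, h5⟩
          exact h3 h5
        · rintro ⟨_, ⟨_, h2⟩, h3⟩
          exact ⟨hk1, h2, fun h => h3 ⟨hc, h⟩⟩
      · -- k = r + 1
        subst hkr
        constructor
        · intro h
          have := gfold_le_length n rest (max q (p + 1))
          omega
        · rintro ⟨_, _, h3⟩
          exfalso
          apply h3
          have : r + 1 - (r + 1) + 1 = 1 := by omega
          rw [this]
          exact ⟨hc, trivial⟩
      · constructor
        · intro h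
          have := gfold_le_length n rest (max q (p + 1))
          omega
        · rintro ⟨h1, _⟩; omega
    · simp only [gfold, if_neg hc]
      rcases Nat.lt_trichotomy k (r + 1) with hkr | hkr | hkr
      · constructor
        · omega
        · rintro ⟨_, h2, _⟩
          exfalso
          have e1 : r + 1 - k = (r - k) + 1 := by omega
          rw [e1] at h2
          exact hc h2.1
      · subst hkr
        constructor
        · intro _
          refine ⟨le_rfl, ?_, ?_⟩
          · have : r + 1 - (r + 1) = 0 := by omega
            rw [this]; trivial
          · have : r + 1 - (r + 1) + 1 = 1 := by omega
            rw [this]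
            intro ⟨h1, _⟩
            exact hc h1
        · intro _; rfl
      · constructor
        · omega
        · rintro ⟨h1, _⟩; omega

end Stmt11Aux
namespace Stmt11Aux

/-- All sorted lists of length `r` with entries in `[b, n]`. -/
def allF (n : ℕ) : ℕ → ℕ → Finset (List ℕ)
  | 0, _ => {[]}
  | r + 1, b => (Finset.Icc b n).biUnion fun q => (allF n r q).image (q :: ·)

/-- Sorted lists of length `r`, entries in `[b, n]`, whose first `t` entries
satisfy the staircase condition (first `t` cars park). -/
def WF (n : ℕ) : ℕ → ℕ → ℕ → Finset (List ℕ)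
  | r, b, 0 => allF n r b
  | 0, _, _ + 1 => {[]}
  | r + 1, b, t + 1 => (Finset.Icc b (n - t)).biUnion fun q => (WF n r q t).image (q :: ·)

lemma mem_allF (n : ℕ) :
    ∀ (r b : ℕ) (L : List ℕ),
    L ∈ allF n r b ↔ (L.length = r ∧ L.Pairwise (· ≤ ·) ∧ ∀ x ∈ L, b ≤ x ∧ x ≤ n) := by
  intro r
  induction r with
  | zero =>
    intro b L
    simp only [allF, Finset.mem_singleton, List.length_eq_zero_iff]
    constructor
    · rintro rfl; simp
    · rintro ⟨rfl, _⟩; rfl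
  | succ r ih =>
    intro b L
    simp only [allF, Finset.mem_biUnion, Finset.mem_image, Finset.mem_Icc]
    constructor
    · rintro ⟨q, ⟨hbq, hqn⟩, M, hM, rfl⟩
      obtain ⟨hlen, hsort, hent⟩ := (ih q M).mp hM
      refine ⟨by simp [hlen], ?_, ?_⟩
      · rw [List.pairwise_cons]
        exact ⟨fun x hx => (hent x hx).1, hsort⟩
      · intro x hx
        rcases List.mem_cons.mp hx with rfl | hx
        · exact ⟨hbq, hqn⟩
        · exact ⟨le_trans hbq (hent x hx).1, (hent x hx).2⟩
    · rintro ⟨hlen, hsort, hent⟩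
      cases L with
      | nil => simp at hlen
      | cons q M =>
        refine ⟨q, ⟨(hent q (by simp)).1, (hent q (by simp)).2⟩, M, ?_, rfl⟩
        rw [List.pairwise_cons] at hsort
        apply (ih q M).mpr
        refine ⟨by simpa using hlen, hsort.2, fun x hx => ⟨hsort.1 x hx, (hent x (by simp [hx])).2⟩⟩

lemma mem_WF (n : ℕ) :
    ∀ (r t b p : ℕ) (L : List ℕ), t ≤ r → p + t ≤ n →
    (L ∈ WF n r b t ↔
      (L.length = r ∧ L.Pairwise (· ≤ ·) ∧ (∀ x ∈ L, b ≤ x ∧ x ≤ n) ∧ ok n t L p)) := by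
  intro r
  induction r with
  | zero =>
    intro t b p L htr _
    interval_cases t
    simp only [WF, mem_allF]
    constructor
    · rintro ⟨h1, h2, h3⟩
      exact ⟨h1, h2, h3, trivial⟩
    · rintro ⟨h1, h2, h3, _⟩
      exact ⟨h1, h2, h3⟩
  | succ r ih =>
    intro t b p L htr hpt
    cases t with
    | zero =>
      simp only [WF, mem_allF]
      constructor
      · rintro ⟨h1, h2, h3⟩
        exact ⟨h1, h2, h3, trivial⟩
      · rintro ⟨h1, h2, h3, _⟩
        exact ⟨h1, h2, h3⟩
    | succ s =>
      simp only [WF, Finset.mem_biUnion, Finset.mem_image, Finset.mem_Icc]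
      have hsn : s ≤ n := by omega
      constructor
      · rintro ⟨q, ⟨hbq, hqns⟩, M, hM, rfl⟩
        have hq' : max q (p + 1) + s ≤ n := by omega
        obtain ⟨hlen, hsort, hent, hok⟩ :=
          (ih s q (max q (p + 1)) M (by omega) hq').mp hM
        refine ⟨by simp [hlen], ?_, ?_, ?_⟩
        · rw [List.pairwise_cons]
          exact ⟨fun x hx => (hent x hx).1, hsort⟩
        · intro x hx
          rcases List.mem_cons.mp hx with rfl | hx
          · exact ⟨hbq, by omega⟩
          · exact ⟨le_trans hbq (hent x hx).1, (hent x hx).2⟩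
        · exact ⟨by omega, hok⟩
      · rintro ⟨hlen, hsort, hent, hok⟩
        cases L with
        | nil => simp at hlen
        | cons q M =>
          rw [List.pairwise_cons] at hsort
          obtain ⟨hmax, hokM⟩ := hok
          have hMlen : M.length = r := by simpa using hlen
          -- q + s ≤ n
          have hqs : q + s ≤ n := by
            cases s with
            | zero => omega
            | succ u =>
              have := ok_bound n M u (max q (p + 1)) hokM (by omega)
              omega
          refine ⟨q, ⟨(hent q (by simp)).1, by omega⟩, M, ?_, rfl⟩
          apply (ih s q (max q (p + 1)) M (by omega) (by omega)).mpr
          exact ⟨hMlen, hsort.2, fun x hx => ⟨hsort.1 x hx, (hent x (by simp [hx])).2⟩, hokM⟩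

lemma disj_cons_image (q q' : ℕ) (s s' : Finset (List ℕ)) (h : q ≠ q') :
    Disjoint (s.image (q :: ·)) (s'.image (q' :: ·)) := by
  rw [Finset.disjoint_left]
  intro L hL hL'
  simp only [Finset.mem_image] at hL hL'
  obtain ⟨M, _, rfl⟩ := hL
  obtain ⟨M', _, hM'⟩ := hL'
  rw [List.cons.injEq] at hM'
  exact h hM'.1.symm

lemma cons_inj (q : ℕ) : Function.Injective (q :: · : List ℕ → List ℕ) := by
  intro x y h
  injection h

lemma sum_Icc_choose (c j : ℕ) :
    ∀ (e b : ℕ), b ≤ e → e ≤ c →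
    (∑ q ∈ Finset.Icc b e, (c - q).choose j) + (c - e).choose (j + 1) =
      (c - b + 1).choose (j + 1) := by
  intro e
  induction e with
  | zero =>
    intro b hb _
    interval_cases b
    simp [Nat.choose_succ_succ]
  | succ e ihe =>
    intro b hb hec
    by_cases hbe : b = e + 1
    · subst hbe
      simp [Nat.choose_succ_succ]
    · have hble : b ≤ e := by omega
      rw [Finset.sum_Icc_succ_top (by omega)]
      have h1 : (c - (e + 1)).choose j + (c - (e + 1)).choose (j + 1) =
          (c - e).choose (j + 1) := by
        have : c - e = (c - (e + 1)) + 1 := by omega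
        rw [this, Nat.choose_succ_succ]
      have := ihe b hble (by omega)
      omega

lemma card_allF (n : ℕ) :
    ∀ (r b : ℕ), b ≤ n → (allF n r b).card = (n - b + r).choose r := by
  intro r
  induction r with
  | zero => intro b _; simp [allF]
  | succ r ih =>
    intro b hb
    rw [show allF n (r+1) b = (Finset.Icc b n).biUnion fun q => (allF n r q).image (q :: ·) from rfl]
    rw [Finset.card_biUnion (fun x _ y _ hxy => disj_cons_image x y _ _ hxy)]
    have hsum : ∀ q ∈ Finset.Icc b n, ((allF n r q).image (q :: ·)).card = (n + r - q).choose r := by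
      intro q hq
      rw [Finset.mem_Icc] at hq
      rw [Finset.card_image_of_injective _ (cons_inj q), ih q hq.2]
      congr 1
      omega
    rw [Finset.sum_congr rfl hsum]
    have := sum_Icc_choose (n + r) r n b hb (by omega)
    have hz : (n + r - n).choose (r + 1) = 0 := by
      have : n + r - n = r := by omega
      rw [this]
      exact Nat.choose_succ_self r
    rw [hz] at this
    have he : n - b + (r + 1) = n + r - b + 1 := by omega
    rw [he]
    omega

end Stmt11Aux
namespace Stmt11Aux

lemma chooseInt_natCast (a j : ℕ) : chooseInt a (j : ℤ) = a.choose j := by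
  simp [chooseInt]

lemma card_WF (n : ℕ) :
    ∀ (r t b : ℕ), 1 ≤ b → b ≤ n → t ≤ r → b + t ≤ n + 1 →
    (WF n r b t).card + chooseInt (n - b + r) ((t : ℤ) - 2) = (n - b + r).choose r := by
  intro r
  induction r with
  | zero =>
    intro t b _ hbn htr _
    interval_cases t
    show (allF n 0 b).card + _ = _
    rw [card_allF n 0 b hbn]
    simp [chooseInt]
  | succ r ih =>
    intro t b hb1 hbn htr hbt
    cases t with
    | zero =>
      show (allF n (r+1) b).card + _ = _
      rw [card_allF n (r+1) b hbn]
      simp [chooseInt]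
    | succ s =>
      have hsn : s ≤ n := by omega
      have hbns : b ≤ n - s := by omega
      rw [show WF n (r+1) b (s+1) =
        (Finset.Icc b (n - s)).biUnion (fun q => (WF n r q s).image (q :: ·)) from rfl]
      rw [Finset.card_biUnion (fun x _ y _ hxy => disj_cons_image x y _ _ hxy)]
      have hcards : ∀ q ∈ Finset.Icc b (n - s),
          ((WF n r q s).image (q :: ·)).card = (WF n r q s).card := by
        intro q _
        exact Finset.card_image_of_injective _ (cons_inj q)
      rw [Finset.sum_congr rfl hcards]
      -- per-q identity from IH
      have hIH : ∀ q ∈ Finset.Icc b (n - s),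
          (WF n r q s).card + chooseInt (n - q + r) ((s : ℤ) - 2) = (n - q + r).choose r := by
        intro q hq
        rw [Finset.mem_Icc] at hq
        exact ih s q (by omega) (by omega) (by omega) (by omega)
      have hsum1 : (∑ q ∈ Finset.Icc b (n - s), (WF n r q s).card) +
          (∑ q ∈ Finset.Icc b (n - s), chooseInt (n - q + r) ((s : ℤ) - 2)) =
          ∑ q ∈ Finset.Icc b (n - s), (n - q + r).choose r := by
        rw [← Finset.sum_add_distrib]
        exact Finset.sum_congr rfl hIH
      -- total sum via hockey stick
      have htot : (∑ q ∈ Finset.Icc b (n - s), (n - q + r).choose r) + (r + s).choose (r + 1) =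
          (n - b + r + 1).choose (r + 1) := by
        have hrw : ∀ q ∈ Finset.Icc b (n - s), (n - q + r).choose r = (n + r - q).choose r := by
          intro q hq
          rw [Finset.mem_Icc] at hq
          congr 1
          omega
        rw [Finset.sum_congr rfl hrw]
        have := sum_Icc_choose (n + r) r (n - s) b hbns (by omega)
        have e1 : n + r - (n - s) = r + s := by omega
        have e2 : n + r - b + 1 = n - b + r + 1 := by omega
        rw [e1, e2] at this
        exact this
      have hgoal2 : n - b + (r + 1) = n - b + r + 1 := by omega
      rw [hgoal2]
      -- cases on s for the chooseInt sums
      match s with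
      | 0 =>
        have hz : ∀ q ∈ Finset.Icc b (n - 0), chooseInt (n - q + r) ((0 : ℕ) - 2 : ℤ) = 0 := by
          intro q _
          simp [chooseInt]
        rw [Finset.sum_congr rfl hz, Finset.sum_const_zero, add_zero] at hsum1
        have hci : chooseInt (n - b + r + 1) (((0:ℕ) + 1 : ℤ) - 2) = 0 := by
          simp [chooseInt]
        push_cast at hci ⊢
        rw [hci, add_zero]
        have hr0 : (r + 0).choose (r + 1) = 0 := by
          simpa using Nat.choose_succ_self r
        omega
      | 1 =>
        have hz : ∀ q ∈ Finset.Icc b (n - 1), chooseInt (n - q + r) ((1 : ℕ) - 2 : ℤ) = 0 := by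
          intro q _
          simp [chooseInt]
        rw [Finset.sum_congr rfl hz, Finset.sum_const_zero, add_zero] at hsum1
        have hci : chooseInt (n - b + r + 1) (((1:ℕ) + 1 : ℤ) - 2) = 1 := by
          simp [chooseInt]
        push_cast at hci ⊢
        rw [hci]
        have hr1 : (r + 1).choose (r + 1) = 1 := Nat.choose_self (r + 1)
        omega
      | u + 2 =>
        have hz : ∀ q ∈ Finset.Icc b (n - (u + 2)), chooseInt (n - q + r) ((u + 2 : ℕ) - 2 : ℤ) =
            (n - q + r).choose u := by
          intro q _
          have : ((u + 2 : ℕ) : ℤ) - 2 = (u : ℤ) := by push_cast; ring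
          rw [this]
          simp [chooseInt]
        rw [Finset.sum_congr rfl hz] at hsum1
        have hsum2 : (∑ q ∈ Finset.Icc b (n - (u + 2)), (n - q + r).choose u) +
            (r + (u + 2)).choose (u + 1) = (n - b + r + 1).choose (u + 1) := by
          have hrw : ∀ q ∈ Finset.Icc b (n - (u + 2)), (n - q + r).choose u = (n + r - q).choose u := by
            intro q hq
            rw [Finset.mem_Icc] at hq
            congr 1
            omega
          rw [Finset.sum_congr rfl hrw]
          have := sum_Icc_choose (n + r) u (n - (u + 2)) b hbns (by omega)
          have e1 : n + r - (n - (u + 2)) = r + (u + 2) := by omega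
          have e2 : n + r - b + 1 = n - b + r + 1 := by omega
          rw [e1, e2] at this
          exact this
        have hsymm : (r + (u + 2)).choose (u + 1) = (r + (u + 2)).choose (r + 1) := by
          have h1 : (r + 1) ≤ r + (u + 2) := by omega
          have := Nat.choose_symm h1
          have e : r + (u + 2) - (r + 1) = u + 1 := by omega
          rw [e] at this
          exact this
        have hci : chooseInt (n - b + r + 1) (((u + 2 : ℕ) + 1 : ℤ) - 2) =
            (n - b + r + 1).choose (u + 1) := by
          have : ((u + 2 : ℕ) + 1 : ℤ) - 2 = ((u + 1 : ℕ) : ℤ) := by push_cast; ring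
          rw [this, chooseInt_natCast]
        push_cast at hci ⊢
        rw [hci]
        omega

end Stmt11Aux
namespace Stmt11Aux

lemma WF_subset (n k m : ℕ) (hm : 1 ≤ m) (hmk : m ≤ k) (hn : k + 1 ≤ n) :
    WF n (n - 1) m (n - k) ⊆ WF n (n - 1) m (n - k - 1) := by
  intro L hL
  have h1 := (mem_WF n (n - 1) (n - k) m m L (by omega) (by omega)).mp hL
  apply (mem_WF n (n - 1) (n - k - 1) m m L (by omega) (by omega)).mpr
  obtain ⟨ha, hb, hc, hd⟩ := h1
  refine ⟨ha, hb, hc, ?_⟩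
  have he : n - k = (n - k - 1) + 1 := by omega
  rw [he] at hd
  exact ok_mono n L _ m hd

lemma opLead_set_eq (n k m : ℕ) (hm : 1 ≤ m) (hmk : m ≤ k) (hn : k + 1 ≤ n) :
    {a : List ℕ | IsOrderedPrefSet n a ∧ flaws n a = k ∧ a.head? = some m} =
      ↑(((WF n (n - 1) m (n - k - 1)).image (m :: ·)) \
        ((WF n (n - 1) m (n - k)).image (m :: ·))) := by
  ext L
  simp only [Set.mem_setOf_eq, Finset.coe_sdiff, Set.mem_diff, Finset.mem_coe,
    Finset.mem_image]
  constructor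
  · rintro ⟨⟨⟨hlen, hent⟩, hsort⟩, hfl, hhead⟩
    cases L with
    | nil => simp at hhead
    | cons x M =>
      obtain rfl : m = x := by simpa using hhead.symm
      rw [List.pairwise_cons] at hsort
      have hMlen : M.length = n - 1 := by simp at hlen; omega
      have hge1 : ∀ x ∈ m :: M, 1 ≤ x := fun x hx => (hent x hx).1
      rw [flaws_eq_gfold n (m :: M) (List.pairwise_cons.mpr hsort) hge1] at hfl
      rw [gfold_eq_iff_ok n k (by omega)] at hfl
      obtain ⟨hkle, hok, hnok⟩ := hfl
      have hLlen : (m :: M).length = n := hlen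
      rw [hLlen] at hok hnok
      have hmax : max m (0 + 1) = m := by omega
      have hokM : ok n (n - k - 1) M m := by
        have he : n - k = (n - k - 1) + 1 := by omega
        rw [he] at hok
        obtain ⟨_, h2⟩ := hok
        rwa [hmax] at h2
      constructor
      · refine ⟨M, ?_, rfl⟩
        apply (mem_WF n (n - 1) (n - k - 1) m m M (by omega) (by omega)).mpr
        refine ⟨hMlen, hsort.2, ?_, hokM⟩
        intro x hx
        exact ⟨hsort.1 x hx, (hent x (by simp [hx])).2⟩
      · rintro ⟨M', hM', hMe⟩
        rw [List.cons.injEq] at hMe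
        have : M' = M := hMe.2
        subst this
        have h2 := (mem_WF n (n - 1) (n - k) m m M' (by omega) (by omega)).mp hM'
        apply hnok
        have he : n - k + 1 = (n - k) + 1 := rfl
        rw [he]
        exact ⟨by rw [hmax]; omega, by rw [hmax]; exact h2.2.2.2⟩
  · rintro ⟨⟨M, hM, rfl⟩, hnot⟩
    obtain ⟨hMlen, hMsort, hMent, hMok⟩ :=
      (mem_WF n (n - 1) (n - k - 1) m m M (by omega) (by omega)).mp hM
    have hsort : (m :: M).Pairwise (· ≤ ·) :=
      List.pairwise_cons.mpr ⟨fun x hx => (hMent x hx).1, hMsort⟩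
    have hent : ∀ x ∈ m :: M, 1 ≤ x ∧ x ≤ n := by
      intro x hx
      rcases List.mem_cons.mp hx with rfl | hx
      · exact ⟨hm, by omega⟩
      · exact ⟨le_trans hm (hMent x hx).1, (hMent x hx).2⟩
    have hlen : (m :: M).length = n := by simp [hMlen]; omega
    refine ⟨⟨⟨hlen, hent⟩, hsort⟩, ?_, rfl⟩
    rw [flaws_eq_gfold n (m :: M) hsort (fun x hx => (hent x hx).1)]
    rw [gfold_eq_iff_ok n k (by omega), hlen]
    have hmax : max m (0 + 1) = m := by omega
    refine ⟨by omega, ?_, ?_⟩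
    · have he : n - k = (n - k - 1) + 1 := by omega
      rw [he]
      exact ⟨by rw [hmax]; omega, by rw [hmax]; exact hMok⟩
    · intro hok
      apply hnot
      have he : n - k + 1 = (n - k) + 1 := rfl
      rw [he] at hok
      obtain ⟨_, h2⟩ := hok
      rw [hmax] at h2
      refine ⟨M, ?_, rfl⟩
      apply (mem_WF n (n - 1) (n - k) m m M (by omega) (by omega)).mpr
      exact ⟨hMlen, hMsort, hMent, h2⟩

lemma opLead_eq_card (n k m : ℕ) (hm : 1 ≤ m) (hmk : m ≤ k) (hn : k + 1 ≤ n) :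
    opLead n k m = (WF n (n - 1) m (n - k - 1)).card - (WF n (n - 1) m (n - k)).card := by
  unfold opLead
  rw [opLead_set_eq n k m hm hmk hn, Set.ncard_coe_finset]
  rw [Finset.card_sdiff_of_subset (Finset.image_subset_image (WF_subset n k m hm hmk hn))]
  rw [Finset.card_image_of_injective _ (cons_inj m), Finset.card_image_of_injective _ (cons_inj m)]

end Stmt11Aux

theorem stmt11 (n k m : ℕ) (hm : 1 ≤ m) (hmk : m ≤ k) (hn : k + 1 ≤ n) :
    (2 * n - m) * opLead n k m = (2 * k - m + 4) * chooseInt (2 * n - m) ((n : ℤ) - k - 2) := by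
  open Stmt11Aux in
  have hmn : m ≤ n := by omega
  set N := n - m + (n - 1) with hN
  have h1 := card_WF n (n - 1) (n - k - 1) m hm hmn (by omega) (by omega)
  have h2 := card_WF n (n - 1) (n - k) m hm hmn (by omega) (by omega)
  have hsub : (WF n (n - 1) m (n - k)).card ≤ (WF n (n - 1) m (n - k - 1)).card :=
    Finset.card_le_card (WF_subset n k m hm hmk hn)
  rw [opLead_eq_card n k m hm hmk hn]
  set W1 := (WF n (n - 1) m (n - k - 1)).card
  set W2 := (WF n (n - 1) m (n - k)).card
  rcases Nat.lt_or_ge n (k + 3) with hcase | hcase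
  · rcases Nat.lt_or_ge n (k + 2) with hc1 | hc2
    · -- n = k + 1
      have hn1 : n = k + 1 := by omega
      have e1 : ((n - k - 1 : ℕ) : ℤ) - 2 = -2 := by omega
      have e2 : ((n - k : ℕ) : ℤ) - 2 = -1 := by omega
      rw [e1] at h1
      rw [e2] at h2
      have z1 : chooseInt N (-2) = 0 := by simp [chooseInt]
      have z2 : chooseInt N (-1) = 0 := by simp [chooseInt]
      rw [z1, add_zero] at h1
      rw [z2, add_zero] at h2
      have ez : ((n : ℤ) - k - 2) = -1 := by omega
      rw [ez]
      have z3 : chooseInt (2 * n - m) (-1) = 0 := by simp [chooseInt]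
      rw [z3]
      have : W1 = W2 := by omega
      rw [this]
      simp
    · -- n = k + 2
      have hn2 : n = k + 2 := by omega
      have e1 : ((n - k - 1 : ℕ) : ℤ) - 2 = -1 := by omega
      have e2 : ((n - k : ℕ) : ℤ) - 2 = ((0 : ℕ) : ℤ) := by omega
      rw [e1] at h1
      rw [e2, chooseInt_natCast, Nat.choose_zero_right] at h2
      have z1 : chooseInt N (-1) = 0 := by simp [chooseInt]
      rw [z1, add_zero] at h1
      have ez : ((n : ℤ) - k - 2) = ((0 : ℕ) : ℤ) := by omega
      rw [ez, chooseInt_natCast, Nat.choose_zero_right]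
      have hW : W1 - W2 = 1 := by omega
      rw [hW]
      omega
  · -- n ≥ k + 3
    set t := n - k - 2 with ht
    have ht1 : 1 ≤ t := by omega
    have e1 : ((n - k - 1 : ℕ) : ℤ) - 2 = ((t - 1 : ℕ) : ℤ) := by omega
    have e2 : ((n - k : ℕ) : ℤ) - 2 = ((t : ℕ) : ℤ) := by omega
    rw [e1, chooseInt_natCast] at h1
    rw [e2, chooseInt_natCast] at h2
    have ez : ((n : ℤ) - k - 2) = ((t : ℕ) : ℤ) := by omega
    rw [ez, chooseInt_natCast]
    set a := N.choose t
    set b := N.choose (t - 1)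
    set c := (N + 1).choose t
    have hE1 : a * (N + 1) = c * (N + 1 - t) := by
      have := Nat.choose_mul_succ_eq N t
      exact this
    have hE2 : (N + 1) * b = c * t := by
      have := Nat.add_one_mul_choose_eq N (t - 1)
      have et : t - 1 + 1 = t := by omega
      rw [et] at this
      rw [this]
    set X := 2 * k - m + 4 with hX
    have hXt : N + 1 - t = X + t := by omega
    have hba : b ≤ a := by
      have h3 : (N + 1) * b ≤ (N + 1) * a := by
        calc (N + 1) * b = c * t := hE2
        _ ≤ c * (X + t) := by nlinarith
        _ = c * (N + 1 - t) := by rw [hXt]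
        _ = a * (N + 1) := hE1.symm
        _ = (N + 1) * a := by ring
      exact Nat.le_of_mul_le_mul_left h3 (by omega)
    have hdb : (W1 - W2) + b = a := by omega
    have h2nm : 2 * n - m = N + 1 := by omega
    rw [h2nm]
    have key : (N + 1) * (W1 - W2) + (N + 1) * b = X * c + (N + 1) * b := by
      calc (N + 1) * (W1 - W2) + (N + 1) * b = (N + 1) * ((W1 - W2) + b) := by ring
      _ = (N + 1) * a := by rw [hdb]
      _ = a * (N + 1) := by ring
      _ = c * (N + 1 - t) := hE1
      _ = c * (X + t) := by rw [hXt]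
      _ = X * c + c * t := by ring
      _ = X * c + (N + 1) * b := by rw [← hE2]
    exact Nat.add_right_cancel key
end
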